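/- arXiv:1107.4259 — 6 statements merged into one kernel-verified Lean document; each statement's English description precedes it below -/
import Mathlib

section
/- Let K be a field complete with respect to a nonarchimedean absolute value whose value group |K*| ⊆ ℝ>0 is nontrivial and free of rank one (i.e., generated by a single real number ≠ 1). Let F be a complete subfield of K with |F*| ≠ {1}. If the residue field extension of F inside the residue field of K is finite, then K is a finite field extension of F. -/
/-- The maximal ideal `{x : |x| < 1}` of the ring of integers `{x : |x| ≤ 1}` of a
nonarchimedean (real-)valued field. -/
def valMaxIdeal {K : Type*} [Field K] (v : Valuation K NNReal) : Ideal v.integer where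
  carrier := {x | v (x : K) < 1}
  add_mem' := fun {a b} ha hb => by
    simpa using lt_of_le_of_lt (v.map_add (a : K) (b : K)) (max_lt ha hb)
  zero_mem' := by
    show v ((0 : v.integer) : K) < 1
    rw [ZeroMemClass.coe_zero, map_zero]
    exact zero_lt_one
  smul_mem' := fun c x hx => by
    have h1 : v (c : K) ≤ 1 := c.2
    have : v ((c : K) * (x : K)) < 1 := by
      rw [v.map_mul]
      exact lt_of_le_of_lt (mul_le_of_le_one_left zero_le h1) hx
    simpa using this

/-- The canonical ring homomorphism from the ring of integers of a subfield `F` of a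
valued field `K` to the residue ring `O_K / m_K` of `K`. -/
noncomputable def subfieldToResidue {K : Type*} [Field K] (v : Valuation K NNReal) (F : Subfield K) :
    (v.comap F.subtype).integer →+*
      (v.integer ⧸ valMaxIdeal v) :=
  (Ideal.Quotient.mk (valMaxIdeal v)).comp
    (RingHom.codRestrict ((F.subtype).comp (Subring.subtype (v.comap F.subtype).integer))
      v.integer (fun x => x.2))

set_option synthInstance.maxHeartbeats 1000000 in
set_option maxHeartbeats 1000000 in
lemma residue_gen {K : Type*} [Field K] (v : Valuation K NNReal) (F : Subfield K)
    (hresfin : (subfieldToResidue v F).Finite) :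
    ∃ (n : ℕ) (c : Fin n → K), (∀ i, v (c i) ≤ 1) ∧
      ∀ y : K, v y ≤ 1 → ∃ a : Fin n → F, (∀ i, v ((a i : K)) ≤ 1) ∧
        v (y - ∑ i, (a i : K) * c i) < 1 := by
  letI := (subfieldToResidue v F).toAlgebra
  have hfin : Module.Finite (v.comap F.subtype).integer (v.integer ⧸ valMaxIdeal v) := hresfin
  obtain ⟨s, hs⟩ := hfin.fg_top
  have hsurj : Function.Surjective (Ideal.Quotient.mk (valMaxIdeal v)) :=
    Ideal.Quotient.mk_surjective
  choose lift hlift using fun q : (v.integer ⧸ valMaxIdeal v) => hsurj q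
  set e := s.equivFin with he
  refine ⟨s.card, fun i => (lift (e.symm i).1 : K), fun i => (lift (e.symm i).1).2, ?_⟩
  intro y hy
  have hmem : Ideal.Quotient.mk (valMaxIdeal v) ⟨y, hy⟩ ∈
      Submodule.span (v.comap F.subtype).integer (s : Set _) := by
    rw [hs]; trivial
  rw [Submodule.mem_span_finset] at hmem
  obtain ⟨f, -, hf⟩ := hmem
  refine ⟨fun i => ((f (e.symm i).1 : F)), fun i => (f (e.symm i).1).2, ?_⟩
  have key : ∀ q ∈ s, f q • q =
      Ideal.Quotient.mk (valMaxIdeal v)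
        (⟨((f q : F) : K), (f q).2⟩ * lift q) := by
    intro q hq
    have h1 : f q • q = subfieldToResidue v F (f q) * q := Algebra.smul_def _ _
    rw [h1, map_mul]
    exact congrArg₂ (· * ·) rfl (hlift q).symm
  rw [Finset.sum_congr rfl key, ← map_sum] at hf
  have hsub : (⟨y, hy⟩ - ∑ q ∈ s, ⟨((f q : F) : K), (f q).2⟩ * lift q : v.integer)
      ∈ valMaxIdeal v := by
    rw [← Ideal.Quotient.eq_zero_iff_mem, map_sub, hf, sub_self]
  have hv1 : v ((⟨y, hy⟩ - ∑ q ∈ s, (⟨((f q : F) : K), (f q).2⟩ * lift q) : v.integer) : K) < 1 :=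
    hsub
  have hcoe : ((⟨y, hy⟩ - ∑ q ∈ s, (⟨((f q : F) : K), (f q).2⟩ * lift q) : v.integer) : K)
      = y - ∑ i, ((f (e.symm i).1 : F) : K) * (lift (e.symm i).1 : K) := by
    push_cast
    congr 1
    rw [← Finset.sum_attach s (fun q => ((f q : F) : K) * (lift q : K)), ← Finset.univ_eq_attach]
    exact (e.symm.sum_comp (fun i => ((f i.1 : F) : K) * (lift i.1 : K))).symm
  rwa [hcoe] at hv1

section MainProof
open Filter Topology

theorem stmt2Aux (K : Type*) [Field K] [Valued K NNReal] [CompleteSpace K]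
    (r : NNReal) (hr0 : r ≠ 0) (hr1 : r ≠ 1)
    (hsub : ∀ x : K, x ≠ 0 → ∃ m : ℤ, Valued.v x = r ^ m)
    (hgen : ∃ x : K, x ≠ 0 ∧ Valued.v x = r)
    (F : Subfield K) [CompleteSpace F]
    (hFnontriv : ∃ x : F, x ≠ 0 ∧ Valued.v (x : K) ≠ 1)
    (hresgen : ∃ (n : ℕ) (c : Fin n → K), (∀ i, Valued.v (c i) ≤ 1) ∧
      ∀ y : K, Valued.v y ≤ 1 → ∃ a : Fin n → F, (∀ i, Valued.v ((a i : K)) ≤ 1) ∧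
        Valued.v (y - ∑ i, (a i : K) * c i) < 1) :
    FiniteDimensional F K := by
  classical
  obtain ⟨x0, hx00, hx0v⟩ := hgen
  -- Normalize the generator to be < 1
  obtain ⟨ρ, π, hρ0, hρ1, hπ0, hπv, hsub'⟩ :
      ∃ (ρ : NNReal) (π : K), ρ ≠ 0 ∧ ρ < 1 ∧ π ≠ 0 ∧ Valued.v π = ρ ∧
        ∀ x : K, x ≠ 0 → ∃ m : ℤ, Valued.v x = ρ ^ m := by
    rcases lt_or_gt_of_ne hr1 with hlt | hgt
    · exact ⟨r, x0, hr0, hlt, hx00, hx0v, hsub⟩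
    · refine ⟨r⁻¹, x0⁻¹, by simp [hr0], ?_, inv_ne_zero hx00, ?_, ?_⟩
      · rw [NNReal.inv_lt_one_iff hr0]; exact hgt
      · rw [map_inv₀, hx0v]
      · intro x hx
        obtain ⟨m, hm⟩ := hsub x hx
        exact ⟨-m, by rw [hm, zpow_neg, inv_zpow, inv_inv]⟩
  have hρpos : (0:NNReal) < ρ := pos_iff_ne_zero.mpr hρ0
  have hρle1 : ρ ≤ 1 := le_of_lt hρ1
  -- discreteness
  have hdisc : ∀ y : K, Valued.v y < 1 → Valued.v y ≤ ρ := by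
    intro y hy
    rcases eq_or_ne y 0 with rfl | hy0
    · simp
    obtain ⟨m, hm⟩ := hsub' y hy0
    rw [hm] at hy ⊢
    have h0 : ρ ^ (0:ℤ) = 1 := zpow_zero ρ
    have hmpos : (0:ℤ) < m := by
      by_contra hmle
      push_neg at hmle
      have := zpow_le_zpow_right_of_le_one₀ hρpos hρle1 hmle
      rw [h0] at this
      exact absurd (lt_of_le_of_lt this hy) (lt_irrefl _)
    calc ρ ^ m ≤ ρ ^ (1:ℤ) := zpow_le_zpow_right_of_le_one₀ hρpos hρle1 hmpos
      _ = ρ := zpow_one ρ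
  -- find t ∈ F of valuation ρ^e, e > 0
  obtain ⟨x1, hx10, hx1v⟩ := hFnontriv
  have hx10K : (x1 : K) ≠ 0 := fun h => hx10 (by exact_mod_cast h)
  obtain ⟨m1, hm1⟩ := hsub' (x1 : K) hx10K
  have hm10 : m1 ≠ 0 := by
    rintro rfl
    rw [zpow_zero] at hm1
    exact hx1v hm1
  obtain ⟨e, t, he, ht0, htv⟩ :
      ∃ (e : ℕ) (t : F), 0 < e ∧ ((t : K)) ≠ 0 ∧ Valued.v (t : K) = ρ ^ e := by
    rcases hm10.lt_or_gt with hneg | hpos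
    · refine ⟨(-m1).toNat, x1⁻¹, by omega, ?_, ?_⟩
      · push_cast
        exact inv_ne_zero hx10K
      · push_cast
        rw [map_inv₀, hm1, ← zpow_neg, ← zpow_natCast, Int.toNat_of_nonneg (by omega)]
    · refine ⟨m1.toNat, x1, by omega, hx10K, ?_⟩
      rw [hm1, ← zpow_natCast, Int.toNat_of_nonneg (by omega)]
  obtain ⟨n, c, hc, hgenres⟩ := hresgen
  -- one-step residue approximation, as a total function
  have step : ∀ y : K, ∃ a : Fin n → F, Valued.v y ≤ 1 →
      (∀ i, Valued.v ((a i : K)) ≤ 1) ∧ Valued.v (y - ∑ i, (a i : K) * c i) ≤ ρ := by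
    intro y
    by_cases hy : Valued.v y ≤ 1
    · obtain ⟨a, ha1, ha2⟩ := hgenres y hy
      exact ⟨a, fun _ => ⟨ha1, hdisc _ ha2⟩⟩
    · exact ⟨0, fun h => absurd h hy⟩
  choose a_of ha_of using step
  -- the auxiliary elements w
  set w : ℕ → K := fun nn => (t : K) ^ (nn / e) * π ^ (nn % e) with hw_def
  have hw : ∀ nn, Valued.v (w nn) = ρ ^ nn := by
    intro nn
    rw [hw_def]
    simp only [map_mul, map_pow, htv, hπv, ← pow_mul, ← pow_add, Nat.div_add_mod]
  have hw0 : ∀ nn, w nn ≠ 0 := fun nn =>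
    mul_ne_zero (pow_ne_zero _ ht0) (pow_ne_zero _ hπ0)
  have hw_eval : ∀ q s, s < e → w (q * e + s) = (t : K) ^ q * π ^ s := by
    intro q s hs
    have h1 : q * e + s = s + e * q := by ring
    rw [hw_def]
    simp only [h1, Nat.add_mul_div_left _ _ he, Nat.add_mul_mod_self_left,
      Nat.div_eq_of_lt hs, Nat.mod_eq_of_lt hs, zero_add]
  -- the span
  set V : Submodule F K :=
    Submodule.span F (Set.range fun p : Fin e × Fin n => π ^ (p.1 : ℕ) * c p.2) with hV_def
  have hOK : ∀ x : K, Valued.v x ≤ 1 → x ∈ V := by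
    intro x hx
    -- the recursive remainder sequence
    set rem : ℕ → K := fun nn =>
      Nat.rec x (fun k r => r - w k * ∑ i, ((a_of (r / w k)) i : K) * c i) nn with hrem_def
    set A : ℕ → Fin n → F := fun k => a_of (rem k / w k) with hA_def
    have hrem0 : rem 0 = x := rfl
    have hremS : ∀ k, rem (k + 1) = rem k - w k * ∑ i, (A k i : K) * c i := fun k => rfl
    have hbound : ∀ k, Valued.v (rem k) ≤ ρ ^ k := by
      intro k
      induction k with
      | zero => simpa [hrem0] using hx
      | succ k ih =>
        have hdiv : Valued.v (rem k / w k) ≤ 1 := by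
          rw [map_div₀, hw k]
          exact div_le_one_of_le₀ ih zero_le
        obtain ⟨-, h2⟩ := ha_of (rem k / w k) hdiv
        have key : rem (k+1) = w k * (rem k / w k - ∑ i, (A k i : K) * c i) := by
          rw [hremS k, mul_sub, mul_div_cancel₀ _ (hw0 k)]
        rw [key, map_mul, hw k, pow_succ]
        exact mul_le_mul' le_rfl h2
    have hAbound : ∀ k i, Valued.v ((A k i : K)) ≤ 1 := by
      intro k i
      have hdiv : Valued.v (rem k / w k) ≤ 1 := by
        rw [map_div₀, hw k]
        exact div_le_one_of_le₀ (hbound k) zero_le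
      exact (ha_of (rem k / w k) hdiv).1 i
    have hsum : ∀ N, x - ∑ nn ∈ Finset.range N, w nn * ∑ i, (A nn i : K) * c i = rem N := by
      intro N
      induction N with
      | zero => simp [hrem0]
      | succ N ih =>
        rw [Finset.sum_range_succ, hremS N, ← ih]
        ring
    -- the coefficient partial sums in F
    set P : Fin e × Fin n → ℕ → F :=
      fun p Q => ∑ q ∈ Finset.range Q, A (q * e + (p.1 : ℕ)) p.2 * t ^ q with hP_def
    have hPcoe : ∀ p Q, ((P p Q : F) : K) =
        ∑ q ∈ Finset.range Q, ((A (q * e + (p.1 : ℕ)) p.2 : K)) * (t : K) ^ q := by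
      intro p Q
      rw [hP_def]
      push_cast
      rfl
    -- Cauchy
    have hcauchyK : ∀ p, CauchySeq (fun Q => ((P p Q : F) : K)) := by
      intro p
      rw [(Valued.hasBasis_uniformity K NNReal).cauchySeq_iff]
      intro γ' _
      set γ : NNRealˣ := Units.map (MonoidWithZeroHom.ValueGroup₀.embedding
        (f := MonoidWithZeroHom.ofClass (Valued.v : Valuation K NNReal))).toMonoidHom γ' with hγ
      obtain ⟨N, hN⟩ := exists_pow_lt_of_lt_one (Units.zero_lt γ) hρ1
      refine ⟨N, fun M hM L hL => ?_⟩
      simp only [Set.mem_setOf_eq, Valuation.restrict_lt_iff_lt_embedding]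
      wlog hML : M ≤ L generalizing M L
      · rw [← Valuation.map_neg, neg_sub]
        exact this L hL M hM (le_of_not_ge hML)
      rw [hPcoe, hPcoe, ← Finset.sum_Ico_eq_sub _ hML]
      apply Valuation.map_sum_lt _ (ne_of_gt (Units.zero_lt γ))
      intro q hq
      rw [Finset.mem_Ico] at hq
      have h1 : Valued.v ((A (q * e + (p.1:ℕ)) p.2 : K) * (t:K)^q) ≤ ρ ^ q := by
        rw [map_mul, map_pow, htv, ← pow_mul]
        calc Valued.v ((A (q * e + (p.1:ℕ)) p.2 : K)) * ρ ^ (e * q)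
            ≤ 1 * ρ ^ (e * q) := mul_le_mul' (hAbound _ _) le_rfl
          _ = ρ ^ (e * q) := one_mul _
          _ ≤ ρ ^ q := pow_le_pow_of_le_one zero_le hρle1 (Nat.le_mul_of_pos_left q he)
      have h2 : ρ ^ q ≤ ρ ^ N := pow_le_pow_of_le_one zero_le hρle1 (hM.trans hq.1)
      exact lt_of_le_of_lt (h1.trans h2) hN
    have hcauchyF : ∀ p, CauchySeq (P p) := by
      intro p
      have h1 : Cauchy (Filter.map (Subtype.val) (Filter.map (P p) Filter.atTop)) := by
        rw [Filter.map_map]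
        exact hcauchyK p
      exact isUniformEmbedding_subtype_val.isUniformInducing.cauchy_map_iff.mp h1
    choose β hβ using fun p => cauchySeq_tendsto_of_complete (hcauchyF p)
    -- the candidate limit
    set σ : K := ∑ p : Fin e × Fin n, ((β p : K)) * (π ^ (p.1 : ℕ) * c p.2) with hσ_def
    have hσV : σ ∈ V := by
      apply Submodule.sum_mem
      intro p _
      have heq : β p • (π ^ (p.1 : ℕ) * c p.2) = ((β p : K)) * (π ^ (p.1 : ℕ) * c p.2) :=
        Algebra.smul_def _ _
      rw [← heq]
      exact Submodule.smul_mem _ _ (Submodule.subset_span ⟨p, rfl⟩)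
    -- sum rearrangement
    have hT : ∀ Q, (∑ nn ∈ Finset.range (Q * e), w nn * ∑ i, (A nn i : K) * c i)
        = ∑ p : Fin e × Fin n, ((P p Q : F) : K) * (π ^ (p.1 : ℕ) * c p.2) := by
      intro Q
      induction Q with
      | zero => simp [hP_def]
      | succ Q ih =>
        have hQe : (Q + 1) * e = Q * e + e := by ring
        rw [hQe, ← Finset.sum_range_add_sum_Ico _ (Nat.le_add_right (Q*e) e), ih,
          Finset.sum_Ico_eq_sum_range]
        simp only [Nat.add_sub_cancel_left]
        have hstep : ∀ p : Fin e × Fin n, ((P p (Q+1) : F) : K) =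
            ((P p Q : F) : K) + ((A (Q * e + (p.1:ℕ)) p.2 : K)) * (t : K) ^ Q := by
          intro p
          rw [hPcoe, hPcoe, Finset.sum_range_succ]
        simp only [hstep, add_mul, Finset.sum_add_distrib]
        congr 1
        rw [Finset.sum_range fun s => w (Q * e + s) * ∑ i, (A (Q * e + s) i : K) * c i,
          Fintype.sum_prod_type]
        apply Finset.sum_congr rfl
        intro s _
        rw [hw_eval Q s s.2, Finset.mul_sum]
        apply Finset.sum_congr rfl
        intro i _
        ring
    -- conclude x = σ
    have hxσ : ∀ γ : NNRealˣ, Valued.v (x - σ) < (γ : NNReal) := by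
      intro γ
      have hev1 : ∀ᶠ Q in atTop, ∀ p : Fin e × Fin n,
          Valued.v (((P p Q : F) : K) - (β p : K)) < (γ : NNReal) := by
        rw [eventually_all]
        intro p
        have htend : Tendsto (fun Q => ((P p Q : F) : K) - (β p : K)) atTop (𝓝 0) := by
          have h1 : Tendsto (fun Q => ((P p Q : F) : K)) atTop (𝓝 ((β p : K))) :=
            (continuous_subtype_val.tendsto (β p)).comp (hβ p)
          have h2 : Tendsto (fun _ : ℕ => ((β p : K))) atTop (𝓝 ((β p : K))) :=
            tendsto_const_nhds
          simpa using h1.sub h2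
        have hnhds : {y : K | Valued.v y < (γ : NNReal)} ∈ 𝓝 (0 : K) :=
          (by
            obtain ⟨N, hN⟩ := exists_pow_lt_of_lt_one (Units.zero_lt γ) hρ1
            have hπN : Valued.v (π ^ N) ≠ 0 := by simp [hπ0]
            have h' : (Valued.v : Valuation K NNReal).restrict (π ^ N) ≠ 0 := by simpa using hπN
            refine Valued.mem_nhds_zero.mpr ⟨Units.mk0 _ h', fun y hy => ?_⟩
            simp only [Set.mem_setOf_eq, Units.val_mk0, Valuation.restrict_lt_iff_lt_embedding,
              Valuation.embedding_restrict] at hy ⊢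
            rw [map_pow, hπv] at hy
            exact hy.trans hN)
        exact htend.eventually (eventually_mem_set.mpr hnhds)
      have hev2 : ∀ᶠ Q in atTop, (ρ : NNReal) ^ (Q * e) < (γ : NNReal) := by
        obtain ⟨N, hN⟩ := exists_pow_lt_of_lt_one (Units.zero_lt γ) hρ1
        filter_upwards [eventually_ge_atTop N] with Q hQ
        calc ρ ^ (Q * e) ≤ ρ ^ N :=
              pow_le_pow_of_le_one zero_le hρle1 (hQ.trans (Nat.le_mul_of_pos_right Q he))
          _ < γ := hN
      obtain ⟨Q, h1, h2⟩ := (hev1.and hev2).exists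
      have h3 : ∑ p : Fin e × Fin n, (((P p Q : F) : K) - (β p : K)) * (π ^ (p.1:ℕ) * c p.2)
          = (∑ p : Fin e × Fin n, ((P p Q : F) : K) * (π ^ (p.1:ℕ) * c p.2)) - σ := by
        rw [hσ_def, ← Finset.sum_sub_distrib]
        exact Finset.sum_congr rfl (fun p _ => by ring)
      have hxT : x - σ = rem (Q * e) +
          (∑ p : Fin e × Fin n, (((P p Q : F) : K) - (β p : K)) * (π ^ (p.1 : ℕ) * c p.2)) := by
        rw [h3, ← hT Q, ← hsum (Q * e)]
        ring
      rw [hxT]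
      refine lt_of_le_of_lt (Valuation.map_add _ _ _) (max_lt ?_ ?_)
      · exact lt_of_le_of_lt (hbound (Q * e)) h2
      · apply Valuation.map_sum_lt _ (ne_of_gt (Units.zero_lt γ))
        intro p _
        have hπc : Valued.v (π ^ (p.1 : ℕ) * c p.2) ≤ 1 := by
          rw [map_mul, map_pow, hπv]
          exact mul_le_one' (pow_le_one' hρle1 _) (hc p.2)
        calc Valued.v ((((P p Q : F) : K) - (β p : K)) * (π ^ (p.1 : ℕ) * c p.2))
            = Valued.v (((P p Q : F) : K) - (β p : K)) * Valued.v (π ^ (p.1 : ℕ) * c p.2) :=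
              map_mul _ _ _
          _ ≤ Valued.v (((P p Q : F) : K) - (β p : K)) * 1 := mul_le_mul' le_rfl hπc
          _ = Valued.v (((P p Q : F) : K) - (β p : K)) := mul_one _
          _ < γ := h1 p
    have hx0' : Valued.v (x - σ) = 0 := by
      by_contra h
      exact absurd (hxσ (Units.mk0 _ h)) (lt_irrefl _)
    have hxeq : x = σ := sub_eq_zero.mp ((Valuation.zero_iff _).mp hx0')
    rw [hxeq]
    exact hσV
  -- every element of K lies in V
  have ht0F : t ≠ 0 := fun h => ht0 (by rw [h]; simp)
  have hall : ∀ x : K, x ∈ V := by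
    intro x
    rcases eq_or_ne x 0 with rfl | hx0
    · exact V.zero_mem
    obtain ⟨m, hm⟩ := hsub' x hx0
    set k : ℕ := m.natAbs with hk_def
    have hek : (0:ℤ) ≤ ((e * k : ℕ) : ℤ) + m := by
      have h1 : (k:ℤ) ≤ ((e * k : ℕ) : ℤ) := by
        push_cast
        nlinarith [he]
      have h2 : -m ≤ (k:ℤ) := by
        rw [hk_def]
        omega
      omega
    have hk : Valued.v ((t:K)^k * x) ≤ 1 := by
      rw [map_mul, map_pow, htv, hm, ← pow_mul, ← zpow_natCast ρ (e*k), ← zpow_add₀ hρ0]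
      calc ρ ^ (((e*k : ℕ):ℤ) + m) ≤ ρ ^ (0:ℤ) :=
            zpow_le_zpow_right_of_le_one₀ hρpos hρle1 hek
        _ = 1 := zpow_zero ρ
    have hmem := hOK _ hk
    have hsmul : ((t^k : F)) • x = ((t^k : F) : K) * x := Algebra.smul_def _ _
    have hco : ((t^k : F) : K) = (t:K)^k := by push_cast; rfl
    have h2 : ((t^k : F)) • x ∈ V := by
      rw [hsmul, hco]
      exact hmem
    have h3 : x = (t^k : F)⁻¹ • (((t^k : F)) • x) :=
      (inv_smul_smul₀ (pow_ne_zero _ ht0F) x).symm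
    rw [h3]
    exact V.smul_mem _ h2
  have hfin : Module.Finite F K := by
    refine ⟨⟨Finset.univ.image fun p : Fin e × Fin n => π ^ (p.1:ℕ) * c p.2, ?_⟩⟩
    rw [Finset.coe_image, Finset.coe_univ, Set.image_univ]
    exact Submodule.eq_top_iff'.mpr hall
  exact hfin


end MainProof

/-- Let `K` be a field complete with respect to a nonarchimedean absolute value whose
value group `|K*|` is nontrivial and free of rank one, generated by a single real number
`r ≠ 1`. Let `F` be a complete subfield of `K` with `|F*| ≠ {1}`. If the residue field
extension of `F` inside the residue field of `K` is finite, then `K` is a finite field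
extension of `F`. -/
theorem stmt2 (K : Type*) [Field K] [Valued K NNReal] [CompleteSpace K]
    (r : NNReal) (hr0 : r ≠ 0) (hr1 : r ≠ 1)
    (hsub : ∀ x : K, x ≠ 0 → ∃ m : ℤ, Valued.v x = r ^ m)
    (hgen : ∃ x : K, x ≠ 0 ∧ Valued.v x = r)
    (F : Subfield K) [CompleteSpace F]
    (hFnontriv : ∃ x : F, x ≠ 0 ∧ Valued.v (x : K) ≠ 1)
    (hresfin : (subfieldToResidue (Valued.v : Valuation K NNReal) F).Finite) :
    FiniteDimensional F K := by
  exact stmt2Aux K r hr0 hr1 hsub hgen F hFnontriv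
    (residue_gen (Valued.v : Valuation K NNReal) F hresfin)
end

section
/- Let F be a field equipped with a valuation v with values in a linearly ordered commutative group with zero (written multiplicatively), and let P = T^n + a_{n-1}T^{n-1} + ⋯ + a_0 be a monic polynomial in F[T] which splits in F; set a_n = 1. Then the following are equivalent: (i) v(λ) > 1 for every root λ of P in F; (ii) v(a_0) > v(a_j) for every j with 0 < j ≤ n. -/
open Polynomial

theorem mul_lt_mul_of_lt_of_le₀ {Γ : Type*} [LinearOrderedCommGroupWithZero Γ] {a b c d : Γ}
    (hab : a ≤ b) (hb : b ≠ 0) (hcd : c < d) : a * c < b * d :=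
  calc a * c ≤ b * c := mul_le_mul_of_nonneg_right hab zero_le'
  _ < b * d := mul_lt_mul_of_pos_left hcd (zero_lt_iff.2 hb)

theorem stmt4_key {F : Type*} [Field F] {Γ : Type*} [LinearOrderedCommGroupWithZero Γ]
    (v : Valuation F Γ) (s : Multiset F) (hs : ∀ a ∈ s, 1 < v a) :
    0 < v (((s.map fun a => X - C a).prod).coeff 0) ∧
      ∀ k, 0 < k → v (((s.map fun a => X - C a).prod).coeff k)
          < v (((s.map fun a => X - C a).prod).coeff 0) := by
  induction s using Multiset.induction_on with
  | empty =>
    refine ⟨by simp, fun k hk => ?_⟩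
    simp [coeff_one, Nat.pos_iff_ne_zero.mp hk]
  | cons a s ih =>
    have ha : 1 < v a := hs a (Multiset.mem_cons_self a s)
    have ha0 : (0:Γ) < v a := lt_trans zero_lt_one ha
    obtain ⟨h0, hk⟩ := ih fun b hb => hs b (Multiset.mem_cons_of_mem hb)
    set Q := (s.map fun a => X - C a).prod with hQ
    have hprod : ((a ::ₘ s).map fun a => X - C a).prod = (X - C a) * Q := by
      simp [hQ]
    rw [hprod]
    have hc0 : ((X - C a) * Q).coeff 0 = -a * Q.coeff 0 := by
      rw [mul_coeff_zero]; simp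
    have hv0 : v (((X - C a) * Q).coeff 0) = v a * v (Q.coeff 0) := by
      rw [hc0, map_mul, Valuation.map_neg]
    constructor
    · rw [hv0]; exact mul_pos ha0 h0
    · intro k hkpos
      obtain ⟨k, rfl⟩ := Nat.exists_eq_add_of_lt hkpos
      rw [zero_add] at *
      have hck : ((X - C a) * Q).coeff (k + 1) = Q.coeff k - a * Q.coeff (k + 1) := by
        rw [sub_mul, coeff_sub, coeff_X_mul, coeff_C_mul]
      rw [hck, hv0]
      have hle := v.map_sub (Q.coeff k) (a * Q.coeff (k + 1))
      have h1 : v (Q.coeff k) < v a * v (Q.coeff 0) := by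
        rcases Nat.eq_zero_or_pos k with hk0 | hk0
        · subst hk0
          calc v (Q.coeff 0) = 1 * v (Q.coeff 0) := (one_mul _).symm
          _ < v a * v (Q.coeff 0) := by
              rw [one_mul, mul_comm]
              simpa using mul_lt_mul_of_lt_of_le₀ (le_refl (v (Q.coeff 0))) (ne_of_gt h0) ha
        · calc v (Q.coeff k) < v (Q.coeff 0) := hk k hk0
          _ = 1 * v (Q.coeff 0) := (one_mul _).symm
          _ < v a * v (Q.coeff 0) := by
              rw [one_mul, mul_comm]
              simpa using mul_lt_mul_of_lt_of_le₀ (le_refl (v (Q.coeff 0))) (ne_of_gt h0) ha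
      have h2 : v (a * Q.coeff (k + 1)) < v a * v (Q.coeff 0) := by
        rw [map_mul]
        exact mul_lt_mul_of_lt_of_le₀ (le_refl (v a)) (ne_of_gt ha0) (hk (k+1) (Nat.succ_pos k))
      exact lt_of_le_of_lt hle (max_lt h1 h2)

/-- Let `v` be a valuation on a field `F` and `P` a monic polynomial over `F` which splits
in `F`. Then `v(λ) > 1` for every root `λ` of `P` iff `v(a₀) > v(a_j)` for every
`0 < j ≤ n = deg P` (where `a_j` are the coefficients of `P`, with `a_n = 1`). -/
theorem stmt4 (F : Type*) [Field F] (Γ : Type*) [LinearOrderedCommGroupWithZero Γ]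
    (v : Valuation F Γ) (P : Polynomial F) (hmonic : P.Monic)
    (hsplit : P.Splits) :
    (∀ l : F, P.IsRoot l → 1 < v l) ↔
      (∀ j : ℕ, 0 < j → j ≤ P.natDegree → v (P.coeff j) < v (P.coeff 0)) := by
  constructor
  · intro hroot j hj _
    have hP : P = (P.roots.map fun a => X - C a).prod :=
      (hsplit.eq_prod_roots_of_monic hmonic)
    have hs : ∀ a ∈ P.roots, 1 < v a := fun a ha =>
      hroot a (isRoot_of_mem_roots ha)
    have := (stmt4_key v P.roots hs).2 j hj
    rwa [← hP] at this
  · intro h l hl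
    by_contra hlt
    push_neg at hlt
    set n := P.natDegree with hn
    have hn0 : 0 < n := by
      rcases Nat.eq_zero_or_pos n with h0 | h0
      · exfalso
        have : P = 1 := hmonic.natDegree_eq_zero.mp h0
        rw [this] at hl
        simp [IsRoot] at hl
      · exact h0
    have hpos : (1:Γ) < v (P.coeff 0) := by
      have := h n hn0 le_rfl
      rwa [hmonic.coeff_natDegree, map_one] at this
    have heval : (0:F) = ∑ i ∈ Finset.range n, P.coeff (i+1) * l ^ (i+1) + P.coeff 0 := by
      have := hl
      rw [IsRoot, eval_eq_sum_range, Finset.sum_range_succ'] at this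
      rw [← this]
      simp [hn]
    have hc0 : P.coeff 0 = -∑ i ∈ Finset.range n, P.coeff (i+1) * l ^ (i+1) := by
      exact eq_neg_of_add_eq_zero_right heval.symm
    have : v (P.coeff 0) < v (P.coeff 0) := by
      calc v (P.coeff 0) = v (∑ i ∈ Finset.range n, P.coeff (i+1) * l ^ (i+1)) := by
            rw [hc0, Valuation.map_neg]
      _ < v (P.coeff 0) := by
          apply v.map_sum_lt (ne_of_gt (lt_trans zero_lt_one hpos))
          intro i hi
          rw [map_mul, map_pow]
          calc v (P.coeff (i+1)) * v l ^ (i+1)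
              ≤ v (P.coeff (i+1)) * 1 := by
                exact mul_le_mul_right (pow_le_one' hlt (i+1)) _
          _ = v (P.coeff (i+1)) := mul_one _
          _ < v (P.coeff 0) := h (i+1) (Nat.succ_pos i) (Finset.mem_range.mp hi)
    exact lt_irrefl _ this
end

section
/- Let K, E, L, F be fields with K ⊆ E ⊆ F and K ⊆ L ⊆ F, and suppose the natural map E ⊗_K L → F is injective. Let A be a valuation subring of K, let B be a valuation subring of L with B ∩ K = A, and let C be a valuation subring of E with C ∩ K = A. Then there exists a valuation subring D of F such that D ∩ E = C and D ∩ L = B. -/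
open scoped TensorProduct


section VNU

def vnu {K₀ : Type*} [Field K₀] (O : ValuationSubring K₀) (x : K₀) : Prop :=
  x ∈ O ∧ (x = 0 ∨ x⁻¹ ∉ O)

namespace vnu

variable {K₀ : Type*} [Field K₀] {O : ValuationSubring K₀} {x y c : K₀}

lemma zero : vnu O 0 := ⟨zero_mem _, Or.inl rfl⟩

lemma mem (h : vnu O x) : x ∈ O := h.1

lemma not_one : ¬ vnu O 1 := by
  rintro ⟨h1, h2 | h2⟩
  · exact one_ne_zero h2
  · exact h2 (by simpa using one_mem O)

lemma mul (hc : c ∈ O) (hx : vnu O x) : vnu O (c * x) := by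
  rcases hx with ⟨hxm, rfl | hxi⟩
  · exact ⟨by simpa using mul_mem hc hxm, Or.inl (by simp)⟩
  refine ⟨mul_mem hc hxm, ?_⟩
  rcases eq_or_ne c 0 with rfl | hc0
  · exact Or.inl (by simp)
  rcases eq_or_ne x 0 with rfl | hx0
  · exact Or.inl (by simp)
  refine Or.inr fun hinv => hxi ?_
  have : x⁻¹ = c * (c * x)⁻¹ := by field_simp
  rw [this]
  exact mul_mem hc hinv

lemma neg (hx : vnu O x) : vnu O (-x) := by
  rcases hx with ⟨hxm, hx2⟩
  refine ⟨neg_mem hxm, ?_⟩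
  rcases hx2 with rfl | hxi
  · exact Or.inl (by simp)
  · refine Or.inr fun h => hxi ?_
    rw [inv_neg] at h
    simpa using neg_mem h

lemma add (hx : vnu O x) (hy : vnu O y) : vnu O (x + y) := by
  rcases hx with ⟨hxm, hx2⟩
  rcases hy with ⟨hym, hy2⟩
  rcases hx2 with rfl | hxi
  · simpa using ⟨hym, hy2⟩
  rcases hy2 with rfl | hyi
  · simpa using ⟨hxm, Or.inr hxi⟩
  have hx0 : x ≠ 0 := fun h => hxi (by simp [h, zero_mem])
  have hy0 : y ≠ 0 := fun h => hyi (by simp [h, zero_mem])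
  refine ⟨add_mem hxm hym, ?_⟩
  rcases eq_or_ne (x + y) 0 with h0 | h0
  · exact Or.inl h0
  refine Or.inr fun hinv => ?_
  rcases O.mem_or_inv_mem (x * y⁻¹) with hr | hr
  · apply hyi
    have : y⁻¹ = (1 + x * y⁻¹) * (x + y)⁻¹ := by field_simp; ring
    rw [this]
    exact mul_mem (add_mem (one_mem _) hr) hinv
  · apply hxi
    rw [show (x * y⁻¹)⁻¹ = y * x⁻¹ by field_simp] at hr
    have : x⁻¹ = (1 + y * x⁻¹) * (x + y)⁻¹ := by field_simp
    rw [this]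
    exact mul_mem (add_mem (one_mem _) hr) hinv

lemma inv_of_not_mem (h : x ∉ O) : vnu O x⁻¹ := by
  have hx0 : x ≠ 0 := fun h0 => h (h0 ▸ zero_mem _)
  refine ⟨(O.mem_or_inv_mem x).resolve_left h, Or.inr (by simpa [hx0] using h)⟩

lemma sum {ι : Type*} {s : Finset ι} {f : ι → K₀} (h : ∀ i ∈ s, vnu O (f i)) :
    vnu O (∑ i ∈ s, f i) :=
  Finset.sum_induction f (vnu O) (fun _ _ => add) zero h

lemma not_iff (hx : x ∈ O) : ¬ vnu O x ↔ x ≠ 0 ∧ x⁻¹ ∈ O := by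
  unfold vnu
  constructor
  · intro h
    by_contra h2
    push_neg at h2
    rcases eq_or_ne x 0 with rfl | h0
    · exact h ⟨hx, Or.inl rfl⟩
    · exact h ⟨hx, Or.inr (h2 h0)⟩
  · rintro ⟨h0, hi⟩ ⟨_, h | h⟩
    · exact h0 h
    · exact h hi

end vnu

end VNU

theorem LDaux {K E L F : Type*} [Field K] [Field E] [Field L] [Field F]
    [Algebra K E] [Algebra K L] [Algebra K F] [Algebra E F] [Algebra L F]
    [IsScalarTower K E F] [IsScalarTower K L F]
    (hinj : Function.Injective
      (Algebra.TensorProduct.productMap (IsScalarTower.toAlgHom K E F)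
        (IsScalarTower.toAlgHom K L F)))
    {m : ℕ} {v : Fin m → L} (hv : LinearIndependent K v) {d : Fin m → E}
    (h : ∑ i, algebraMap E F (d i) * algebraMap L F (v i) = 0) (j : Fin m) : d j = 0 := by
  classical
  have ht : (∑ i, d i ⊗ₜ[K] v i : E ⊗[K] L) = 0 := by
    apply hinj
    rw [map_sum, map_zero]
    simpa [Algebra.TensorProduct.productMap_apply_tmul] using h
  obtain ⟨W', hW'⟩ := Submodule.exists_isCompl (Submodule.span K (Set.range v))
  set proj := (Submodule.span K (Set.range v)).linearProjOfIsCompl W' hW' with hproj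
  set φ : L →ₗ[K] K := (Finsupp.lapply j) ∘ₗ (hv.repr : _ →ₗ[K] Fin m →₀ K) ∘ₗ proj with hφdef
  have hφ : ∀ i, φ (v i) = if j = i then 1 else 0 := by
    intro i
    have hvm : v i ∈ Submodule.span K (Set.range v) := Submodule.subset_span ⟨i, rfl⟩
    have h1 : proj (v i) = ⟨v i, hvm⟩ := Submodule.linearProjOfIsCompl_apply_left hW' ⟨v i, hvm⟩
    simp [hφdef, h1, hv.repr_eq_single i ⟨v i, hvm⟩ rfl, Finsupp.single_apply, eq_comm]
  have h2 := congrArg (fun z => (TensorProduct.rid K E) ((LinearMap.lTensor E φ) z)) ht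
  simp only [map_sum, LinearMap.lTensor_tmul, TensorProduct.rid_tmul, map_zero] at h2
  rw [Finset.sum_congr rfl (fun i _ => by rw [hφ i])] at h2
  simpa [ite_smul] using h2

lemma exists_pivot {K : Type*} [Field K] (A : ValuationSubring K) {ι : Type*} [Fintype ι]
    (lam : ι → K) {j₀ : ι} (h : lam j₀ ≠ 0) :
    ∃ j, lam j ≠ 0 ∧ ∀ i, lam i / lam j ∈ A := by
  classical
  obtain ⟨j, hj, hmax⟩ := Finset.exists_max_image
    (Finset.univ.filter fun i => lam i ≠ 0) (fun i => A.valuation (lam i)) ⟨j₀, by simp [h]⟩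
  have hj0 : lam j ≠ 0 := (Finset.mem_filter.mp hj).2
  refine ⟨j, hj0, fun i => ?_⟩
  rcases eq_or_ne (lam i) 0 with h0 | h0
  · simp [h0, zero_mem]
  · have hle := hmax i (by simp [h0])
    rw [← ValuationSubring.valuation_le_one_iff, map_div₀]
    have hne : A.valuation (lam j) ≠ 0 := by
      simpa [Valuation.ne_zero_iff] using hj0
    rw [div_le_one₀ (zero_lt_iff.mpr hne)]
    exact hle

section Core

variable {K E L F : Type*} [Field K] [Field E] [Field L] [Field F]
    [Algebra K E] [Algebra K L] [Algebra K F] [Algebra E F] [Algebra L F]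
    [IsScalarTower K E F] [IsScalarTower K L F]
    (A : ValuationSubring K) (B : ValuationSubring L) (C : ValuationSubring E)

theorem vnu_map_of_vnu (hCA : ∀ x : K, algebraMap K E x ∈ C ↔ x ∈ A)
    {a : K} (ha : vnu A a) : vnu C (algebraMap K E a) := by
  rcases ha with ⟨ham, h2⟩
  refine ⟨(hCA a).mpr ham, ?_⟩
  rcases h2 with rfl | hi
  · exact Or.inl (map_zero _)
  · refine Or.inr fun h => hi ?_
    rw [← map_inv₀] at h
    exact (hCA _).mp h

theorem vnu_of_vnu_map (hCA : ∀ x : K, algebraMap K E x ∈ C ↔ x ∈ A)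
    {a : K} (ha : vnu C (algebraMap K E a)) : vnu A a := by
  rcases ha with ⟨ham, h2⟩
  refine ⟨(hCA a).mp ham, ?_⟩
  rcases h2 with h0 | hi
  · exact Or.inl (by simpa using h0)
  · refine Or.inr fun h => hi ?_
    rw [← map_inv₀]
    exact (hCA _).mpr h

theorem core
    (hinj : Function.Injective
      (Algebra.TensorProduct.productMap (IsScalarTower.toAlgHom K E F)
        (IsScalarTower.toAlgHom K L F)))
    (hBA : ∀ x : K, algebraMap K L x ∈ B ↔ x ∈ A)
    (hCA : ∀ x : K, algebraMap K E x ∈ C ↔ x ∈ A) :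
    ∀ (n : ℕ) (c : Fin n → E) (b : Fin n → L) (u : E),
      (∀ i, c i ∈ C) → (∀ i, b i ∈ B) →
      (∀ i, vnu C (c i) ∨ vnu B (b i)) → u ∈ C →
      (∑ i, algebraMap E F (c i) * algebraMap L F (b i)) = algebraMap E F u →
      vnu C u := by
  intro n
  induction n with
  | zero =>
    intro c b u _ _ _ _ hsum
    have : u = 0 := by
      have h0 : algebraMap E F u = 0 := by simpa using hsum.symm
      simpa using h0
    exact this ▸ vnu.zero
  | succ n IH =>
    intro c b u hc hb hcb hu hsum
    have hKF : ∀ a : K, algebraMap L F (algebraMap K L a) = algebraMap E F (algebraMap K E a) :=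
      fun a => by rw [← IsScalarTower.algebraMap_apply, ← IsScalarTower.algebraMap_apply]
    by_cases hLI : LinearIndependent K (Fin.cons (1 : L) b)
    · have h0 : ∑ j : Fin (n + 2),
          algebraMap E F (Fin.cons (α := fun _ => E) (-u) c j) *
            algebraMap L F (Fin.cons (α := fun _ => L) (1 : L) b j) = 0 := by
        rw [Fin.sum_univ_succ]
        simp only [Fin.cons_zero, Fin.cons_succ, map_one, mul_one, map_neg]
        rw [hsum]
        ring
      have hz := LDaux hinj hLI h0 0
      simp only [Fin.cons_zero, neg_eq_zero] at hz
      exact hz ▸ vnu.zero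
    · obtain ⟨lam, hrel, j₀, hj₀⟩ := Fintype.not_linearIndependent_iff.mp hLI
      obtain ⟨jp, hjp0, hdiv⟩ := exists_pivot A lam hj₀
      have hrescale : ∀ t : K, t ≠ 0 →
          ∑ j : Fin (n + 2), (lam j / t) • (Fin.cons (1 : L) b : Fin (n + 2) → L) j = 0 := by
        intro t ht
        have := congrArg (fun z => t⁻¹ • z) hrel
        simp only [Finset.smul_sum, smul_smul, smul_zero] at this
        convert this using 2 with j
        rw [div_eq_inv_mul]
      -- find the elimination index istar and normalized coefficients μ
      obtain ⟨istar, μ, hμA, hμ1, hrelμ, hkey, hkey0⟩ :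
          ∃ (istar : Fin (n + 1)) (μ : Fin (n + 2) → K),
            (∀ j, μ j ∈ A) ∧ (μ istar.succ = 1) ∧
            (∑ j : Fin (n + 2), μ j • (Fin.cons (1 : L) b : Fin (n + 2) → L) j = 0) ∧
            (∀ i : Fin (n + 1), ¬ vnu B (b i) →
              vnu C (c istar * algebraMap K E (μ i.succ))) ∧
            (vnu C (c istar * algebraMap K E (μ 0))) := by
        set ν : Fin (n + 2) → K := fun j => lam j / lam jp with hν
        have hνA : ∀ j, ν j ∈ A := hdiv
        by_cases hcaseA : ∃ i : Fin (n + 1), ¬ vnu A (ν i.succ) ∧ ¬ vnu B (b i)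
        · obtain ⟨i0, hi0A, hi0B⟩ := hcaseA
          have hi0mem := hνA i0.succ
          obtain ⟨hi0ne, hi0inv⟩ := (vnu.not_iff hi0mem).mp hi0A
          have hlamne : lam i0.succ ≠ 0 := by
            intro h
            exact hi0ne (by simp [hν, h])
          refine ⟨i0, fun j => lam j / lam i0.succ, fun j => ?_, div_self hlamne,
            hrescale _ hlamne, fun i _ => ?_, ?_⟩
          · show lam j / lam i0.succ ∈ A
            have : lam j / lam i0.succ = ν j * (ν i0.succ)⁻¹ := by
              simp only [hν]
              field_simp
            rw [this]
            exact mul_mem (hνA j) hi0inv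
          · rw [mul_comm]
            refine vnu.mul ((hCA _).mpr ?_) ((hcb i0).resolve_right hi0B)
            show lam i.succ / lam i0.succ ∈ A
            have : lam i.succ / lam i0.succ = ν i.succ * (ν i0.succ)⁻¹ := by
              simp only [hν]
              field_simp
            rw [this]
            exact mul_mem (hνA _) hi0inv
          · rw [mul_comm]
            refine vnu.mul ((hCA _).mpr ?_) ((hcb i0).resolve_right hi0B)
            show lam 0 / lam i0.succ ∈ A
            have : lam 0 / lam i0.succ = ν 0 * (ν i0.succ)⁻¹ := by
              simp only [hν]
              field_simp
            rw [this]
            exact mul_mem (hνA _) hi0inv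
        · push_neg at hcaseA
          have hcaseB : ∀ i : Fin (n + 1), ¬ vnu B (b i) → vnu A (ν i.succ) := by
            intro i hi
            by_contra h
            exact hi (hcaseA i h)
          have hrelν := hrescale (lam jp) hjp0
          have hν0 : vnu A (ν 0) := by
            rw [Fin.sum_univ_succ] at hrelν
            simp only [Fin.cons_zero, Fin.cons_succ] at hrelν
            have heq : algebraMap K L (ν 0) = -∑ i : Fin (n + 1), ν i.succ • b i := by
              have h1 : (ν 0) • (1 : L) = algebraMap K L (ν 0) := by
                rw [Algebra.smul_def, mul_one]
              rw [← h1]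
              exact eq_neg_of_add_eq_zero_left hrelν
            have h2 : vnu B (algebraMap K L (ν 0)) := by
              rw [heq]
              refine vnu.neg (vnu.sum fun i _ => ?_)
              rw [Algebra.smul_def]
              by_cases hbi : vnu B (b i)
              · exact vnu.mul ((hBA _).mpr (hνA i.succ)) hbi
              · rw [mul_comm]
                exact vnu.mul (hb i) (vnu_map_of_vnu A B hBA (hcaseB i hbi))
            exact vnu_of_vnu_map A B hBA h2
          have hjpne : jp ≠ 0 := by
            intro h
            have h1 : ν jp = 1 := by simp [hν, div_self hjp0]
            rw [h] at h1
            rw [h1] at hν0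
            exact vnu.not_one hν0
          obtain ⟨i0, rfl⟩ := Fin.eq_succ_of_ne_zero hjpne
          refine ⟨i0, ν, hνA, by simp [hν, div_self hjp0], hrescale _ hjp0, fun i hi => ?_, ?_⟩
          · exact vnu.mul (hc i0) (vnu_map_of_vnu A C hCA (hcaseB i hi))
          · exact vnu.mul (hc i0) (vnu_map_of_vnu A C hCA hν0)
      have hrelF : algebraMap E F (algebraMap K E (μ 0)) +
          (algebraMap L F (b istar) + ∑ i : Fin n,
            algebraMap E F (algebraMap K E (μ (istar.succAbove i).succ)) *
              algebraMap L F (b (istar.succAbove i))) = 0 := by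
        have h1 := congrArg (algebraMap L F) hrelμ
        rw [map_sum, map_zero, Fin.sum_univ_succ] at h1
        simp only [Fin.cons_zero, Fin.cons_succ, Algebra.smul_def, map_mul, map_one, mul_one] at h1
        rw [Fin.sum_univ_succAbove
          (fun i => algebraMap L F (algebraMap K L (μ i.succ)) * algebraMap L F (b i)) istar] at h1
        simp only [hKF] at h1
        rw [hμ1] at h1
        simpa [map_one] using h1
      have hsum2 : algebraMap E F (c istar) * algebraMap L F (b istar) +
          ∑ i : Fin n, algebraMap E F (c (istar.succAbove i)) *
            algebraMap L F (b (istar.succAbove i)) = algebraMap E F u := by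
        rw [Fin.sum_univ_succAbove (fun i => algebraMap E F (c i) * algebraMap L F (b i)) istar]
          at hsum
        exact hsum
      set u' : E := u + c istar * algebraMap K E (μ 0) with hu'
      set c' : Fin n → E :=
        fun i => c (istar.succAbove i) - c istar * algebraMap K E (μ (istar.succAbove i).succ)
        with hc'
      have hsum' : ∑ i : Fin n, algebraMap E F (c' i) * algebraMap L F (b (istar.succAbove i)) =
          algebraMap E F u' := by
        have expand : ∀ i : Fin n,
            algebraMap E F (c' i) * algebraMap L F (b (istar.succAbove i)) =
              algebraMap E F (c (istar.succAbove i)) * algebraMap L F (b (istar.succAbove i)) -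
                algebraMap E F (c istar) *
                  (algebraMap E F (algebraMap K E (μ (istar.succAbove i).succ)) *
                    algebraMap L F (b (istar.succAbove i))) := by
          intro i
          simp only [hc', map_sub, map_mul]
          ring
        rw [Finset.sum_congr rfl fun i _ => expand i, Finset.sum_sub_distrib, ← Finset.mul_sum,
          hu', map_add, map_mul]
        linear_combination hsum2 - algebraMap E F (c istar) * hrelF
      have hvnu' : vnu C u' := by
        refine IH c' (fun i => b (istar.succAbove i)) u'
          (fun i => sub_mem (hc _) (mul_mem (hc istar) ((hCA _).mpr (hμA _))))
          (fun i => hb _) ?_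
          (add_mem hu (mul_mem (hc istar) ((hCA _).mpr (hμA _)))) hsum'
        intro i
        by_cases hbi : vnu B (b (istar.succAbove i))
        · exact Or.inr hbi
        · refine Or.inl ?_
          have h1 : c' i = c (istar.succAbove i) +
              -(c istar * algebraMap K E (μ (istar.succAbove i).succ)) := by
            rw [hc']
            ring
          rw [h1]
          exact vnu.add ((hcb _).resolve_right hbi) (vnu.neg (hkey _ hbi))
      have hufin : u = u' + -(c istar * algebraMap K E (μ 0)) := by
        rw [hu']
        ring
      rw [hufin]
      exact vnu.add hvnu' (vnu.neg hkey0)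

end Core


/-- Let `K ⊆ E ⊆ F` and `K ⊆ L ⊆ F` be fields such that the natural map `E ⊗_K L → F` is
injective. Let `A`, `B`, `C` be valuation subrings of `K`, `L`, `E` respectively with
`B ∩ K = A` and `C ∩ K = A`. Then there is a valuation subring `D` of `F` with
`D ∩ E = C` and `D ∩ L = B`. -/
theorem stmt6 (K E L F : Type*) [Field K] [Field E] [Field L] [Field F]
    [Algebra K E] [Algebra K L] [Algebra K F] [Algebra E F] [Algebra L F]
    [IsScalarTower K E F] [IsScalarTower K L F]
    (hinj : Function.Injective
      (Algebra.TensorProduct.productMap (IsScalarTower.toAlgHom K E F)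
        (IsScalarTower.toAlgHom K L F)))
    (A : ValuationSubring K) (B : ValuationSubring L) (C : ValuationSubring E)
    (hBA : ∀ x : K, algebraMap K L x ∈ B ↔ x ∈ A)
    (hCA : ∀ x : K, algebraMap K E x ∈ C ↔ x ∈ A) :
    ∃ D : ValuationSubring F,
      (∀ x : E, algebraMap E F x ∈ D ↔ x ∈ C) ∧
      (∀ x : L, algebraMap L F x ∈ D ↔ x ∈ B) := by
  classical
  set Sgen : Set F :=
    {z | ∃ c ∈ C, ∃ b ∈ B, z = algebraMap E F c * algebraMap L F b} with hSgen
  set Tgen : Set F :=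
    {z | ∃ c ∈ C, ∃ b ∈ B, (vnu C c ∨ vnu B b) ∧ z = algebraMap E F c * algebraMap L F b}
    with hTgen
  set S : Subring F := Subring.closure Sgen with hS
  set J : AddSubmonoid F := AddSubmonoid.closure Tgen with hJ
  have hJneg : ∀ z ∈ J, -z ∈ J := by
    intro z hz
    induction hz using AddSubmonoid.closure_induction with
    | mem y hy =>
      obtain ⟨c, hc, b, hb, hy, rfl⟩ := hy
      exact AddSubmonoid.subset_closure
        ⟨-c, neg_mem hc, b, hb, by rcases hy with h | h; exacts [Or.inl (by
          simpa using vnu.mul (neg_mem (one_mem C)) h), Or.inr h], by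
            rw [map_neg]; ring⟩
    | zero => simpa using J.zero_mem
    | add x y _ _ hx hy => simpa [neg_add_rev] using J.add_mem hy hx
  have habsgen : ∀ s ∈ Sgen, ∀ j ∈ J, s * j ∈ J := by
    rintro s ⟨c, hc, b, hb, rfl⟩ j hj
    induction hj using AddSubmonoid.closure_induction with
    | mem y hy =>
      obtain ⟨c', hc', b', hb', hy', rfl⟩ := hy
      refine AddSubmonoid.subset_closure ⟨c * c', mul_mem hc hc', b * b', mul_mem hb hb', ?_, by
        rw [map_mul, map_mul]; ring⟩
      rcases hy' with h | h
      · exact Or.inl (vnu.mul hc h)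
      · exact Or.inr (vnu.mul hb h)
    | zero => simpa using J.zero_mem
    | add x y _ _ hx hy => simpa [mul_add] using J.add_mem hx hy
  have habs : ∀ s ∈ S, ∀ j ∈ J, s * j ∈ J := by
    intro s hs
    induction hs using Subring.closure_induction with
    | mem y hy => exact habsgen y hy
    | zero => intro j hj; simpa using J.zero_mem
    | one => intro j hj; simpa using hj
    | add x y _ _ hx hy => intro j hj; simpa [add_mul] using J.add_mem (hx j hj) (hy j hj)
    | neg x _ hx => intro j hj; simpa [neg_mul] using hJneg _ (hx j hj)
    | mul x y _ _ hx hy => intro j hj; simpa [mul_assoc] using hx _ (hy j hj)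
  have hCS : ∀ x : E, x ∈ C → algebraMap E F x ∈ S := fun x hx =>
    Subring.subset_closure ⟨x, hx, 1, one_mem B, by simp⟩
  have hBS : ∀ x : L, x ∈ B → algebraMap L F x ∈ S := fun x hx =>
    Subring.subset_closure ⟨1, one_mem C, x, hx, by simp⟩
  set I : Ideal S :=
    { carrier := {s : S | (s : F) ∈ J}
      add_mem' := fun {a b} ha hb => J.add_mem ha hb
      zero_mem' := J.zero_mem
      smul_mem' := fun r x hx => by
        show ((r * x : S) : F) ∈ J
        exact habs r.1 r.2 x.1 hx } with hI
  have hInotTop : I ≠ ⊤ := by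
    rw [Ideal.ne_top_iff_one]
    intro hone
    have h1J : (1 : F) ∈ J := hone
    obtain ⟨l, hl, hlsum⟩ := AddSubmonoid.exists_list_of_mem_closure h1J
    have hch : ∀ i : Fin l.length, ∃ cb : E × L, cb.1 ∈ C ∧ cb.2 ∈ B ∧
        (vnu C cb.1 ∨ vnu B cb.2) ∧ l.get i = algebraMap E F cb.1 * algebraMap L F cb.2 := by
      intro i
      obtain ⟨c, hc, b, hb, hy, he⟩ := hl _ (l.get_mem i)
      exact ⟨(c, b), hc, hb, hy, he⟩
    choose cb hc hb hcb heq using hch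
    have hsum : ∑ i : Fin l.length,
        algebraMap E F ((cb i).1) * algebraMap L F ((cb i).2) = algebraMap E F 1 := by
      have hls : l.sum = ∑ i : Fin l.length, l.get i := by
        conv_lhs => rw [← List.ofFn_get l]
        rw [List.sum_ofFn]
      rw [map_one, ← hlsum, hls]
      exact Finset.sum_congr rfl fun i _ => (heq i).symm
    exact vnu.not_one
      (core A B C hinj hBA hCA l.length (fun i => (cb i).1) (fun i => (cb i).2) 1
        hc hb hcb (one_mem C) hsum)
  obtain ⟨M, hMmax, hIM⟩ := Ideal.exists_le_maximal I hInotTop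
  haveI := hMmax.isPrime
  obtain ⟨D, hD⟩ := (LocalSubring.ofPrime S M).exists_le_valuationSubring
  have hSD : ∀ z : F, z ∈ S → z ∈ D := fun z hz =>
    hD.1 (LocalSubring.le_ofPrime S M hz)
  -- killing lemma : an element of M cannot have its inverse partner in D
  have hkill : ∀ (z w : F) (hzS : z ∈ S), (⟨z, hzS⟩ : S) ∈ M → w ∈ D → z * w = 1 → False := by
    intro z w hzS hzM hwD hzw
    have hnu : ¬ IsUnit (algebraMap S (LocalSubring.ofPrime S M).toSubring
        ⟨z, hzS⟩) := by
      rw [IsLocalization.AtPrime.isUnit_to_map_iff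
        (LocalSubring.ofPrime S M).toSubring M]
      exact fun h => h hzM
    have hloc := hD.2
    apply hnu
    apply hloc.1
    refine isUnit_iff_exists_inv.mpr ⟨⟨w, hwD⟩, ?_⟩
    exact Subtype.ext hzw
  refine ⟨D, fun x => ⟨fun hxD => ?_, fun hxC => hSD _ (hCS x hxC)⟩,
    fun x => ⟨fun hxD => ?_, fun hxB => hSD _ (hBS x hxB)⟩⟩
  · by_contra hxC
    have hx0 : x ≠ 0 := fun h => hxC (h ▸ zero_mem C)
    have hvnu : vnu C x⁻¹ := vnu.inv_of_not_mem hxC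
    have hzS : algebraMap E F x⁻¹ ∈ S := hCS _ hvnu.mem
    have hzJ : algebraMap E F x⁻¹ ∈ J := AddSubmonoid.subset_closure
      ⟨x⁻¹, hvnu.mem, 1, one_mem B, Or.inl hvnu, by simp⟩
    refine hkill (algebraMap E F x⁻¹) (algebraMap E F x) hzS (hIM hzJ) hxD ?_
    rw [← map_mul, inv_mul_cancel₀ hx0, map_one]
  · by_contra hxB
    have hx0 : x ≠ 0 := fun h => hxB (h ▸ zero_mem B)
    have hvnu : vnu B x⁻¹ := vnu.inv_of_not_mem hxB
    have hzS : algebraMap L F x⁻¹ ∈ S := hBS _ hvnu.mem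
    have hzJ : algebraMap L F x⁻¹ ∈ J := AddSubmonoid.subset_closure
      ⟨1, one_mem C, x⁻¹, hvnu.mem, Or.inr hvnu, by simp⟩
    refine hkill (algebraMap L F x⁻¹) (algebraMap L F x) hzS (hIM hzJ) hxD ?_
    rw [← map_mul, inv_mul_cancel₀ hx0, map_one]
end

section
/- Let A → B be a local homomorphism of Noetherian local rings, with m the maximal ideal of A. Let φ : M → N be a B-linear map of finitely generated B-modules, and suppose that both M and N are flat as A-modules and that the induced map φ ⊗_A A/m : M/mM → N/mN is injective. Then φ is injective and the cokernel of φ is flat as an A-module. -/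
open Function TensorProduct LinearMap

universe u v

section AuxLemmas

variable {A : Type*} [CommRing A] {M : Type*} {N : Type*} [AddCommGroup M] [AddCommGroup N]
  [Module A M] [Module A N]

private lemma smul_top_le_comap (φ : M →ₗ[A] N) (J : Ideal A) :
    J • (⊤ : Submodule A M) ≤ (J • (⊤ : Submodule A N)).comap φ := by
  rw [← Submodule.map_le_iff_le_comap, Submodule.map_smul'']
  exact smul_mono_right _ le_top

private lemma rTensor_injective_iff (φ : M →ₗ[A] N) (J : Ideal A) :
    Function.Injective (LinearMap.rTensor (A ⧸ J) φ) ↔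
      ∀ x : M, φ x ∈ J • (⊤ : Submodule A N) → x ∈ J • (⊤ : Submodule A M) := by
  set eM := tensorQuotEquivQuotSMul M J with heM
  set eN := tensorQuotEquivQuotSMul N J with heN
  have comm : ∀ u : M ⊗[A] (A ⧸ J),
      eN (LinearMap.rTensor (A ⧸ J) φ u) =
        Submodule.mapQ _ _ φ (smul_top_le_comap φ J) (eM u) := by
    have : eN.toLinearMap ∘ₗ LinearMap.rTensor (A ⧸ J) φ =
        (Submodule.mapQ _ _ φ (smul_top_le_comap φ J)) ∘ₗ eM.toLinearMap := by
      apply TensorProduct.ext'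
      intro x y
      obtain ⟨r, rfl⟩ := Ideal.Quotient.mk_surjective y
      simp [heM, heN, Submodule.mapQ_apply, map_smul]
    exact fun u => LinearMap.congr_fun this u
  constructor
  · intro hT x hx
    have h1 : LinearMap.rTensor (A ⧸ J) φ (eM.symm (Submodule.Quotient.mk x)) = 0 := by
      apply eN.injective
      rw [comm, LinearEquiv.apply_symm_apply, map_zero, Submodule.mapQ_apply]
      exact (Submodule.Quotient.mk_eq_zero _).mpr hx
    have hu : eM.symm (Submodule.Quotient.mk x) = 0 := hT (by rw [h1, map_zero])
    have := congrArg eM hu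
    rw [LinearEquiv.apply_symm_apply, map_zero] at this
    exact (Submodule.Quotient.mk_eq_zero _).mp this
  · intro hP
    rw [injective_iff_map_eq_zero]
    intro u hu
    obtain ⟨x, hx⟩ := Submodule.Quotient.mk_surjective _ (eM u)
    have hφx : φ x ∈ J • (⊤ : Submodule A N) := by
      have h2 := comm u
      rw [hu, map_zero, ← hx, Submodule.mapQ_apply] at h2
      exact (Submodule.Quotient.mk_eq_zero _).mp h2.symm
    have h3 : eM u = 0 := by
      rw [← hx]
      exact (Submodule.Quotient.mk_eq_zero _).mpr (hP x hφx)
    have := congrArg eM.symm h3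
    rwa [LinearEquiv.symm_apply_apply, map_zero] at this


private lemma rTensor_chase [Module.Flat A M] [Module.Flat A N]
    (φ : M →ₗ[A] N) {P₁ P₂ P₃ : Type*}
    [AddCommGroup P₁] [AddCommGroup P₂] [AddCommGroup P₃]
    [Module A P₁] [Module A P₂] [Module A P₃]
    {g₁ : P₁ →ₗ[A] P₂} {g₂ : P₂ →ₗ[A] P₃}
    (hex : Function.Exact g₁ g₂) (hg₁ : Function.Injective g₁)
    (h1 : Function.Injective (LinearMap.rTensor P₁ φ))
    (h3 : Function.Injective (LinearMap.rTensor P₃ φ)) :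
    Function.Injective (LinearMap.rTensor P₂ φ) := by
  rw [injective_iff_map_eq_zero]
  intro u hu
  have comm1 : LinearMap.rTensor P₃ φ (LinearMap.lTensor M g₂ u) =
      LinearMap.lTensor N g₂ (LinearMap.rTensor P₂ φ u) := by
    rw [← LinearMap.comp_apply, ← LinearMap.comp_apply, LinearMap.rTensor_comp_lTensor,
      LinearMap.lTensor_comp_rTensor]
  have h2 : LinearMap.lTensor M g₂ u = 0 :=
    (injective_iff_map_eq_zero _).mp h3 _ (by rw [comm1, hu, map_zero])
  have hMex : Function.Exact (LinearMap.lTensor M g₁) (LinearMap.lTensor M g₂) :=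
    Module.Flat.lTensor_exact M hex
  obtain ⟨y, hy⟩ := (hMex u).mp h2
  have comm2 : LinearMap.lTensor N g₁ (LinearMap.rTensor P₁ φ y) =
      LinearMap.rTensor P₂ φ u := by
    rw [← hy, ← LinearMap.comp_apply, ← LinearMap.comp_apply, LinearMap.lTensor_comp_rTensor,
      LinearMap.rTensor_comp_lTensor]
  have hNg₁ : Function.Injective (LinearMap.lTensor N g₁) :=
    Module.Flat.lTensor_preserves_injective_linearMap g₁ hg₁
  have hy0 : LinearMap.rTensor P₁ φ y = 0 :=
    (injective_iff_map_eq_zero _).mp hNg₁ _ (by rw [comm2, hu])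
  have : y = 0 := (injective_iff_map_eq_zero _).mp h1 _ hy0
  rw [← hy, this, map_zero]

private lemma rTensor_injective_of_isTorsionBySet [IsLocalRing A] [Module.Flat A N]
    (φ : M →ₗ[A] N)
    (hk : Function.Injective (LinearMap.rTensor (A ⧸ IsLocalRing.maximalIdeal A) φ))
    (Q : Type*) [AddCommGroup Q] [Module A Q]
    (hQ : Module.IsTorsionBySet A Q (IsLocalRing.maximalIdeal A)) :
    Function.Injective (LinearMap.rTensor Q φ) := by
  set m := IsLocalRing.maximalIdeal A with hm
  classical
  letI := Ideal.Quotient.field m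
  letI : Module (A ⧸ m) Q := hQ.module
  haveI : IsScalarTower A (A ⧸ m) Q := hQ.isScalarTower
  -- Q is free over the residue field
  let ι := Module.Free.ChooseBasisIndex (A ⧸ m) Q
  let e : Q ≃ₗ[A ⧸ m] (ι →₀ (A ⧸ m)) := (Module.Free.chooseBasis (A ⧸ m) Q).repr
  let e' : Q ≃ₗ[A] (ι →₀ (A ⧸ m)) := e.restrictScalars A
  -- step 1: injectivity for (ι →₀ A⧸m)
  have hF : Function.Injective (LinearMap.rTensor (ι →₀ (A ⧸ m)) φ) := by
    rw [injective_iff_map_eq_zero]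
    intro u hu
    have hcomp : ∀ i : ι, LinearMap.rTensor (A ⧸ m) φ
        (LinearMap.lTensor M (Finsupp.lapply i) u) = 0 := by
      intro i
      rw [← LinearMap.comp_apply, LinearMap.rTensor_comp_lTensor,
        ← LinearMap.lTensor_comp_rTensor, LinearMap.comp_apply, hu, map_zero]
    have hz : ∀ i : ι, TensorProduct.finsuppRight A A M (A ⧸ m) ι u i = 0 := by
      intro i
      rw [TensorProduct.finsuppRight_apply]
      exact (injective_iff_map_eq_zero _).mp hk _ (hcomp i)
    have : TensorProduct.finsuppRight A A M (A ⧸ m) ι u = 0 := Finsupp.ext hz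
    have := congrArg (TensorProduct.finsuppRight A A M (A ⧸ m) ι).symm this
    rwa [LinearEquiv.symm_apply_apply, map_zero] at this
  -- step 2: transfer along e'
  have comm : ∀ u : M ⊗[A] Q,
      (TensorProduct.congr (LinearEquiv.refl A N) e') (LinearMap.rTensor Q φ u) =
        LinearMap.rTensor (ι →₀ (A ⧸ m)) φ
          ((TensorProduct.congr (LinearEquiv.refl A M) e') u) := by
    have : (TensorProduct.congr (LinearEquiv.refl A N) e').toLinearMap ∘ₗ
        LinearMap.rTensor Q φ =
        LinearMap.rTensor (ι →₀ (A ⧸ m)) φ ∘ₗ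
          (TensorProduct.congr (LinearEquiv.refl A M) e').toLinearMap := by
      apply TensorProduct.ext'
      intro x q
      simp
    exact fun u => LinearMap.congr_fun this u
  intro u v huv
  apply (TensorProduct.congr (LinearEquiv.refl A M) e').injective
  apply hF
  rw [← comm, ← comm, huv]


private lemma key_induction [IsLocalRing A] [Module.Flat A M] [Module.Flat A N]
    (φ : M →ₗ[A] N)
    (hk : Function.Injective (LinearMap.rTensor (A ⧸ IsLocalRing.maximalIdeal A) φ))
    (I : Ideal A) (n : ℕ) :
    Function.Injective (LinearMap.rTensor (A ⧸ (I ⊔ (IsLocalRing.maximalIdeal A) ^ n)) φ) := by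
  set m := IsLocalRing.maximalIdeal A with hm
  induction n with
  | zero =>
    have htop : (I ⊔ m ^ 0 : Ideal A) = ⊤ := by
      rw [pow_zero, Ideal.one_eq_top, sup_top_eq]
    haveI : Subsingleton (A ⧸ (I ⊔ m ^ 0 : Ideal A)) := by
      rw [htop]
      exact Submodule.Quotient.subsingleton_iff.mpr rfl
    have hid : (LinearMap.id : (A ⧸ (I ⊔ m ^ 0 : Ideal A)) →ₗ[A] _) = 0 := by
      exact Subsingleton.elim _ _
    have h0 : ∀ w : M ⊗[A] (A ⧸ (I ⊔ m ^ 0 : Ideal A)), w = 0 := by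
      intro w
      have h1 : (LinearMap.id (R := A) (M := A ⧸ (I ⊔ m ^ 0 : Ideal A))).lTensor M w = w := by
        rw [LinearMap.lTensor_id]; rfl
      rw [← h1, hid, LinearMap.lTensor_zero]; rfl
    intro u v _
    rw [h0 u, h0 v]
  | succ n ih =>
    set J'' := I ⊔ m ^ n with hJ''
    set J' := I ⊔ m ^ (n + 1) with hJ'
    have hle : J' ≤ J'' := sup_le_sup_left (Ideal.pow_le_pow_right (Nat.le_succ n)) I
    have hmul : m * J'' ≤ J' := by
      rw [Ideal.mul_sup]
      apply sup_le
      · exact le_sup_of_le_left Ideal.mul_le_right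
      · rw [← pow_succ']
        exact le_sup_right
    set Q : Submodule A (A ⧸ J') := Submodule.map J'.mkQ (J'' : Submodule A A) with hQdef
    have hexact : Function.Exact Q.subtype (Submodule.mapQ J' J'' LinearMap.id hle) := by
      rw [LinearMap.exact_iff, Submodule.range_subtype]
      ext u
      obtain ⟨a, rfl⟩ := Submodule.Quotient.mk_surjective _ u
      simp only [LinearMap.mem_ker, Submodule.mapQ_apply, LinearMap.id_coe, id_eq,
        Submodule.Quotient.mk_eq_zero]
      constructor
      · intro ha
        exact ⟨a, ha, rfl⟩
      · rintro ⟨b, hb, hba⟩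
        have hd : b - a ∈ J' := (Submodule.Quotient.eq _).mp hba
        have ha : a = b - (b - a) := by ring
        rw [ha]
        exact Submodule.sub_mem _ hb (hle hd)
    have hQt : Module.IsTorsionBySet A Q (m : Set A) := by
      rintro ⟨qv, hqv⟩ ⟨c, hc⟩
      obtain ⟨a, ha, rfl⟩ := hqv
      apply Subtype.ext
      show c • (J'.mkQ a) = 0
      rw [Submodule.mkQ_apply, ← Submodule.Quotient.mk_smul, Submodule.Quotient.mk_eq_zero]
      exact hmul (Ideal.mul_mem_mul hc ha)
    exact rTensor_chase φ hexact (Submodule.injective_subtype Q)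
      (rTensor_injective_of_isTorsionBySet φ hk Q hQt) ih


private lemma smul_top_restrictScalars' {A B M : Type*} [CommRing A] [CommRing B] [Algebra A B]
    [AddCommGroup M] [Module A M] [Module B M] [IsScalarTower A B M] (I : Ideal A) :
    (I • (⊤ : Submodule A M) : Submodule A M) =
      Submodule.restrictScalars A ((I.map (algebraMap A B)) • (⊤ : Submodule B M)) := by
  apply le_antisymm
  · rw [Submodule.smul_le]
    intro r hr x _
    rw [Submodule.restrictScalars_mem, ← algebraMap_smul B r x]
    exact Submodule.smul_mem_smul (Ideal.mem_map_of_mem _ hr) Submodule.mem_top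
  · intro z hz
    rw [Submodule.restrictScalars_mem] at hz
    let T : Submodule B B :=
      { carrier := {r : B | ∀ y : M, r • y ∈ (I • (⊤ : Submodule A M) : Submodule A M)}
        add_mem' := by
          intro r s hr hs y
          rw [add_smul]
          exact Submodule.add_mem _ (hr y) (hs y)
        zero_mem' := by
          intro y
          rw [zero_smul]
          exact Submodule.zero_mem _
        smul_mem' := by
          intro b r hr y
          rw [smul_eq_mul, mul_comm, mul_smul]
          exact hr (b • y) }
    have hmap : I.map (algebraMap A B) ≤ T := by
      rw [Ideal.map_le_iff_le_comap]
      intro i hi y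
      rw [algebraMap_smul]
      exact Submodule.smul_mem_smul hi Submodule.mem_top
    refine Submodule.smul_induction_on hz ?_ ?_
    · intro r hr x _
      exact hmap hr x
    · intro u v hu hv
      exact Submodule.add_mem _ hu hv


private lemma krull_intersection {B : Type u} [CommRing B] [IsNoetherianRing B] [IsLocalRing B]
    (P : Type v) [AddCommGroup P] [Module B P] [Module.Finite B P] :
    (⨅ n : ℕ, (IsLocalRing.maximalIdeal B) ^ n • ⊤ : Submodule B P) = ⊥ := by
  obtain ⟨n, f, hf⟩ := Module.Finite.exists_fin' B P
  haveI : Small.{u} P := small_of_surjective hf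
  let e : Shrink.{u} P ≃ₗ[B] P := Shrink.linearEquiv B P
  haveI : Module.Finite B (Shrink.{u} P) :=
    Module.Finite.of_surjective (e.symm.toLinearMap ∘ₗ f) (e.symm.surjective.comp hf)
  have hb := Ideal.iInf_pow_smul_eq_bot_of_isLocalRing (R := B) (M := Shrink.{u} P)
    (I := IsLocalRing.maximalIdeal B) (Ideal.IsMaximal.ne_top inferInstance)
  rw [eq_bot_iff]
  intro x hx
  have hmap : ∀ J : Ideal B,
      Submodule.map e.toLinearMap (J • ⊤ : Submodule B (Shrink.{u} P)) =
        (J • ⊤ : Submodule B P) := by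
    intro J
    rw [Submodule.map_smul'', Submodule.map_top, LinearEquiv.range]
  have hx' : e.symm x ∈ (⨅ n : ℕ, (IsLocalRing.maximalIdeal B) ^ n • ⊤ :
      Submodule B (Shrink.{u} P)) := by
    rw [Submodule.mem_iInf]
    intro i
    have hxi : x ∈ ((IsLocalRing.maximalIdeal B) ^ i • ⊤ : Submodule B P) :=
      Submodule.mem_iInf _ |>.mp hx i
    rw [← hmap] at hxi
    obtain ⟨y, hy, hxy⟩ := hxi
    have : e.symm x = y := by rw [← hxy]; exact e.symm_apply_apply y
    rwa [this]
  rw [hb, Submodule.mem_bot] at hx'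
  have := congrArg e hx'
  rw [LinearEquiv.apply_symm_apply, map_zero] at this
  rw [Submodule.mem_bot]
  exact this


end AuxLemmas

/-- Let `A → B` be a local homomorphism of Noetherian local rings, `m` the maximal ideal
of `A`, and `φ : M → N` a `B`-linear map of finitely generated `B`-modules, with `M` and
`N` flat over `A`. If the induced map `M/mM → N/mN` is injective, then `φ` is injective
and `coker φ` is flat over `A`. -/
theorem stmt9 (A B : Type*) [CommRing A] [CommRing B]
    [IsNoetherianRing A] [IsNoetherianRing B] [IsLocalRing A] [IsLocalRing B]
    [Algebra A B] [IsLocalHom (algebraMap A B)]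
    (M N : Type*) [AddCommGroup M] [AddCommGroup N]
    [Module B M] [Module B N] [Module A M] [Module A N]
    [IsScalarTower A B M] [IsScalarTower A B N]
    [Module.Finite B M] [Module.Finite B N] [Module.Flat A M] [Module.Flat A N]
    (φ : M →ₗ[B] N)
    (h : Function.Injective
      (Submodule.mapQ
        ((IsLocalRing.maximalIdeal A) • (⊤ : Submodule A M))
        ((IsLocalRing.maximalIdeal A) • (⊤ : Submodule A N))
        (φ.restrictScalars A)
        (by
          rw [← Submodule.map_le_iff_le_comap, Submodule.map_smul'']
          exact smul_mono_right _ le_top))) :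
    Function.Injective φ ∧ Module.Flat A (N ⧸ LinearMap.range φ) := by
  classical
  set m := IsLocalRing.maximalIdeal A with hmdef
  set φ' := φ.restrictScalars A with hφ'
  -- elementwise form of h
  have hPm : ∀ x : M, φ' x ∈ m • (⊤ : Submodule A N) → x ∈ m • (⊤ : Submodule A M) := by
    intro x hx
    have h0 : Submodule.Quotient.mk (p := m • (⊤ : Submodule A M)) x = 0 := by
      apply h
      rw [map_zero, Submodule.mapQ_apply]
      exact (Submodule.Quotient.mk_eq_zero _).mpr hx
    exact (Submodule.Quotient.mk_eq_zero _).mp h0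
  have hk : Function.Injective (LinearMap.rTensor (A ⧸ m) φ') :=
    (rTensor_injective_iff φ' m).mpr hPm
  -- map of m into the maximal ideal of B
  have hmB : m.map (algebraMap A B) ≤ IsLocalRing.maximalIdeal B := by
    rw [Ideal.map_le_iff_le_comap]
    intro a ha
    rw [Ideal.mem_comap, IsLocalRing.mem_maximalIdeal, mem_nonunits_iff]
    intro hu
    exact (IsLocalRing.mem_maximalIdeal a).mp ha (IsLocalHom.map_nonunit a hu)
  -- the key elementwise statement for all ideals
  have hPI : ∀ (I : Ideal A), ∀ x : M,
      φ' x ∈ I • (⊤ : Submodule A N) → x ∈ I • (⊤ : Submodule A M) := by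
    intro I x hx
    have hxn : ∀ n : ℕ, x ∈ (I ⊔ m ^ n) • (⊤ : Submodule A M) := by
      intro n
      refine (rTensor_injective_iff φ' (I ⊔ m ^ n)).mp (key_induction φ' hk I n) x ?_
      exact Submodule.smul_mono le_sup_left le_rfl hx
    set S : Submodule B M := (I.map (algebraMap A B)) • ⊤ with hSdef
    rw [smul_top_restrictScalars' (B := B) I, Submodule.restrictScalars_mem]
    have hxq : ∀ n : ℕ, Submodule.Quotient.mk (p := S) x ∈
        ((IsLocalRing.maximalIdeal B) ^ n • ⊤ : Submodule B (M ⧸ S)) := by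
      intro n
      have hxn' := hxn n
      rw [Submodule.sup_smul] at hxn'
      obtain ⟨y, hy, z, hz, hyz⟩ := Submodule.mem_sup.mp hxn'
      have hy' : Submodule.Quotient.mk (p := S) y = 0 := by
        rw [Submodule.Quotient.mk_eq_zero]
        have := (smul_top_restrictScalars' (B := B) (M := M) I).le hy
        rwa [Submodule.restrictScalars_mem] at this
      have hz' : z ∈ Submodule.restrictScalars A
          (((IsLocalRing.maximalIdeal B) ^ n) • (⊤ : Submodule B M)) := by
        have h1 := (smul_top_restrictScalars' (B := B) (M := M) (m ^ n)).le hz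
        rw [Submodule.restrictScalars_mem] at h1
        rw [Submodule.restrictScalars_mem]
        refine Submodule.smul_mono ?_ le_rfl h1
        rw [Ideal.map_pow]
        exact Ideal.pow_right_mono hmB n
      rw [Submodule.restrictScalars_mem] at hz'
      have : Submodule.Quotient.mk (p := S) x = Submodule.Quotient.mk (p := S) z := by
        rw [← hyz, Submodule.Quotient.mk_add, hy', zero_add]
      rw [this]
      have : Submodule.Quotient.mk (p := S) z ∈
          Submodule.map S.mkQ (((IsLocalRing.maximalIdeal B) ^ n) • (⊤ : Submodule B M)) :=
        Submodule.mem_map_of_mem hz'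
      rwa [Submodule.map_smul'', Submodule.map_top, Submodule.range_mkQ] at this
    have hbot := krull_intersection (B := B) (M ⧸ S)
    have h0 : Submodule.Quotient.mk (p := S) x = 0 := by
      have : Submodule.Quotient.mk (p := S) x ∈
          (⨅ n : ℕ, (IsLocalRing.maximalIdeal B) ^ n • ⊤ : Submodule B (M ⧸ S)) :=
        Submodule.mem_iInf _ |>.mpr hxq
      rwa [hbot, Submodule.mem_bot] at this
    exact (Submodule.Quotient.mk_eq_zero _).mp h0
  -- injectivity
  have hinj : Function.Injective φ := by
    rw [injective_iff_map_eq_zero]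
    intro x hx
    have : x ∈ (⊥ : Ideal A) • (⊤ : Submodule A M) :=
      hPI ⊥ x (by rw [hφ', LinearMap.restrictScalars_apply, hx]; exact Submodule.zero_mem _)
    rwa [Submodule.bot_smul, Submodule.mem_bot] at this
  refine ⟨hinj, ?_⟩
  -- flatness of the cokernel
  rw [Module.Flat.iff_lTensor_injective']
  intro I
  have hexact : Function.Exact φ' (((LinearMap.range φ).mkQ).restrictScalars A) := by
    intro y
    constructor
    · intro hy
      have hy' : y ∈ LinearMap.range φ := by
        have : Submodule.Quotient.mk (p := LinearMap.range φ) y = 0 := hy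
        rwa [Submodule.Quotient.mk_eq_zero] at this
      obtain ⟨w, hw⟩ := hy'
      exact ⟨w, hw⟩
    · rintro ⟨w, rfl⟩
      show Submodule.Quotient.mk (p := LinearMap.range φ) (φ' w) = 0
      rw [Submodule.Quotient.mk_eq_zero]
      exact ⟨w, rfl⟩
  refine lTensor_injective_of_exact_of_exact_of_rTensor_injective
    hexact (fun c => Submodule.mkQ_surjective _ c)
    (LinearMap.exact_subtype_mkQ (I : Submodule A A)) (Submodule.mkQ_surjective _)
    ((rTensor_injective_iff φ' I).mpr (hPI I)) ?_
  exact Module.Flat.lTensor_preserves_injective_linearMap _ (Submodule.injective_subtype _)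
end

section
/- Let A → B be a local homomorphism of Noetherian local rings, with residue field κ = A/m, and let G → F → E be a complex of finitely generated B-modules such that F and E are flat as A-modules. If the induced complex G ⊗_A κ → F ⊗_A κ → E ⊗_A κ is exact, then G → F → E is exact, and moreover G ⊗_A L → F ⊗_A L → E ⊗_A L is exact for every A-module L. -/
open TensorProduct LinearMap

namespace LocalCritAux

variable {A : Type*} [CommRing A]

section transfer

variable {M₁ N₁ P₁ M₂ N₂ P₂ : Type*}
  [AddCommGroup M₁] [AddCommGroup N₁] [AddCommGroup P₁]
  [AddCommGroup M₂] [AddCommGroup N₂] [AddCommGroup P₂]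
  [Module A M₁] [Module A N₁] [Module A P₁] [Module A M₂] [Module A N₂] [Module A P₂]

lemma exact_transfer (a₁ : M₁ →ₗ[A] N₁) (b₁ : N₁ →ₗ[A] P₁)
    (a₂ : M₂ →ₗ[A] N₂) (b₂ : N₂ →ₗ[A] P₂)
    (eM : M₁ ≃ₗ[A] M₂) (eN : N₁ ≃ₗ[A] N₂) (eP : P₁ ≃ₗ[A] P₂)
    (ha : ∀ x, eN (a₁ x) = a₂ (eM x)) (hb : ∀ y, eP (b₁ y) = b₂ (eN y))
    (h : Function.Exact a₁ b₁) : Function.Exact a₂ b₂ := by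
  intro y
  constructor
  · intro hy
    have h0 : eP (b₁ (eN.symm y)) = 0 := by
      rw [hb, eN.apply_symm_apply, hy]
    obtain ⟨x, hx⟩ := (h (eN.symm y)).mp ((_root_.map_eq_zero_iff _ eP.injective).mp h0)
    exact ⟨eM x, by rw [← ha, hx, eN.apply_symm_apply]⟩
  · rintro ⟨x, rfl⟩
    obtain ⟨x', rfl⟩ := eM.surjective x
    rw [← ha, ← hb, h.apply_apply_eq_zero, map_zero]

end transfer

lemma rT_lT_comm {M N L₁ L₂ : Type*} [AddCommGroup M] [AddCommGroup N]
    [AddCommGroup L₁] [AddCommGroup L₂]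
    [Module A M] [Module A N] [Module A L₁] [Module A L₂]
    (a : M →ₗ[A] N) (φ : L₁ →ₗ[A] L₂) (t : M ⊗[A] L₁) :
    φ.lTensor N (a.rTensor L₁ t) = a.rTensor L₂ (φ.lTensor M t) := by
  rw [← LinearMap.comp_apply, ← LinearMap.comp_apply, lTensor_comp_rTensor,
    rTensor_comp_lTensor]

variable {G F E : Type*} [AddCommGroup G] [AddCommGroup F] [AddCommGroup E]
  [Module A G] [Module A F] [Module A E]

lemma rTensor_comp_zero (g : G →ₗ[A] F) (f : F →ₗ[A] E) (hfg : ∀ x, f (g x) = 0)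
    {L : Type*} [AddCommGroup L] [Module A L] (t : G ⊗[A] L) :
    f.rTensor L (g.rTensor L t) = 0 := by
  rw [← LinearMap.comp_apply, ← LinearMap.rTensor_comp]
  have h0 : f ∘ₗ g = 0 := by ext x; exact hfg x
  rw [h0]
  simp

lemma chase [Module.Flat A E] (g : G →ₗ[A] F) (f : F →ₗ[A] E) (hfg : ∀ x, f (g x) = 0)
    {L : Type*} [AddCommGroup L] [Module A L] (L' : Submodule A L)
    (h1 : Function.Exact (g.rTensor L') (f.rTensor L'))
    (h2 : Function.Exact (g.rTensor (L ⧸ L')) (f.rTensor (L ⧸ L'))) :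
    Function.Exact (g.rTensor L) (f.rTensor L) := by
  intro x
  constructor
  · intro hx
    -- image in the quotient part
    have hπx : f.rTensor (L ⧸ L') (L'.mkQ.lTensor F x) = 0 := by
      rw [← rT_lT_comm, hx, map_zero]
    obtain ⟨y'', hy''⟩ := (h2 _).mp hπx
    obtain ⟨y, rfl⟩ := LinearMap.lTensor_surjective (g := L'.mkQ) G
      (Submodule.mkQ_surjective L') y''
    have hx₁ : L'.mkQ.lTensor F (x - g.rTensor L y) = 0 := by
      rw [map_sub, ← hy'', rT_lT_comm, sub_self]
    have hrow : Function.Exact (L'.subtype.lTensor F) (L'.mkQ.lTensor F) :=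
      lTensor_exact F (LinearMap.exact_subtype_mkQ L') (Submodule.mkQ_surjective L')
    obtain ⟨x', hx'⟩ := (hrow _).mp hx₁
    have hEinj : Function.Injective (L'.subtype.lTensor E) :=
      Module.Flat.lTensor_preserves_injective_linearMap _ L'.injective_subtype
    have hfx' : f.rTensor L' x' = 0 := by
      apply hEinj
      rw [map_zero, rT_lT_comm, hx', map_sub, hx, rTensor_comp_zero g f hfg, sub_self]
    obtain ⟨y', hy'⟩ := (h1 _).mp hfx'
    refine ⟨y + L'.subtype.lTensor G y', ?_⟩
    rw [map_add, ← rT_lT_comm, hy', hx']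
    abel
  · rintro ⟨y, rfl⟩
    exact rTensor_comp_zero g f hfg y



lemma exact_mapRange {ι M N P : Type*} [AddCommGroup M] [AddCommGroup N] [AddCommGroup P]
    [Module A M] [Module A N] [Module A P]
    (a : M →ₗ[A] N) (b : N →ₗ[A] P) (h : Function.Exact a b) :
    Function.Exact (Finsupp.mapRange.linearMap (α := ι) a)
      (Finsupp.mapRange.linearMap (α := ι) b) := by
  classical
  intro v
  constructor
  · intro hv
    have hvi : ∀ i, b (v i) = 0 := by
      intro i
      have := congrArg (fun w : ι →₀ P => w i) hv
      simpa using this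
    refine ⟨Finsupp.onFinset v.support
      (fun i => if hv0 : v i = 0 then 0 else Classical.choose ((h (v i)).mp (hvi i))) ?_, ?_⟩
    · intro i hi
      by_contra hns
      simp [Finsupp.notMem_support_iff.mp hns] at hi
    · ext i
      simp only [Finsupp.mapRange.linearMap_apply, Finsupp.mapRange_apply, Finsupp.onFinset_apply]
      by_cases hv0 : v i = 0
      · simp [hv0]
      · simpa [hv0] using Classical.choose_spec ((h (v i)).mp (hvi i))
  · rintro ⟨u, rfl⟩
    ext i
    simpa using h.apply_apply_eq_zero (u i)


lemma finsuppRight_comm {M N W ι : Type*} [AddCommGroup M] [AddCommGroup N] [AddCommGroup W]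
    [Module A M] [Module A N] [Module A W] [DecidableEq ι] (a : M →ₗ[A] N) (t : M ⊗[A] (ι →₀ W)) :
    TensorProduct.finsuppRight A A N W ι (a.rTensor (ι →₀ W) t) =
      Finsupp.mapRange.linearMap (a.rTensor W) (TensorProduct.finsuppRight A A M W ι t) := by
  ext i
  rw [TensorProduct.finsuppRight_apply, Finsupp.mapRange.linearMap_apply,
    Finsupp.mapRange_apply, TensorProduct.finsuppRight_apply]
  rw [← LinearMap.comp_apply, ← LinearMap.comp_apply, lTensor_comp_rTensor, rTensor_comp_lTensor]

lemma exact_rTensor_finsupp {W : Type*} (ι : Type*) [AddCommGroup W] [Module A W] [DecidableEq ι]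
    (g : G →ₗ[A] F) (f : F →ₗ[A] E)
    (h : Function.Exact (g.rTensor W) (f.rTensor W)) :
    Function.Exact (g.rTensor (ι →₀ W)) (f.rTensor (ι →₀ W)) := by
  refine exact_transfer (Finsupp.mapRange.linearMap (α := ι) (g.rTensor W))
    (Finsupp.mapRange.linearMap (α := ι) (f.rTensor W))
    (g.rTensor (ι →₀ W)) (f.rTensor (ι →₀ W))
    (TensorProduct.finsuppRight A A G W ι).symm
    (TensorProduct.finsuppRight A A F W ι).symm
    (TensorProduct.finsuppRight A A E W ι).symm
    ?_ ?_ (exact_mapRange _ _ h)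
  · intro p
    obtain ⟨t, rfl⟩ := (TensorProduct.finsuppRight A A G W ι).surjective p
    rw [LinearEquiv.symm_apply_apply, ← finsuppRight_comm, LinearEquiv.symm_apply_apply]
  · intro p
    obtain ⟨t, rfl⟩ := (TensorProduct.finsuppRight A A F W ι).surjective p
    rw [LinearEquiv.symm_apply_apply, ← finsuppRight_comm, LinearEquiv.symm_apply_apply]

lemma lTensor_equiv_apply {M N P : Type*} [AddCommGroup M] [AddCommGroup N] [AddCommGroup P]
    [Module A M] [Module A N] [Module A P] (e : N ≃ₗ[A] P) (t : M ⊗[A] N) :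
    (LinearEquiv.lTensor M e) t = ((e : N →ₗ[A] P).lTensor M) t := by
  rw [← LinearEquiv.coe_lTensor]; rfl

lemma exact_of_smul_top_eq_bot (m : Ideal A) [m.IsMaximal]
    (g : G →ₗ[A] F) (f : F →ₗ[A] E)
    (hbase : Function.Exact (g.rTensor (A ⧸ m)) (f.rTensor (A ⧸ m)))
    (L : Type*) [AddCommGroup L] [Module A L]
    (hL : m • (⊤ : Submodule A L) = ⊥) :
    Function.Exact (g.rTensor L) (f.rTensor L) := by
  have hts : Module.IsTorsionBySet A L m := by
    intro x c
    have hx : (c : A) • x ∈ m • (⊤ : Submodule A L) :=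
      Submodule.smul_mem_smul c.2 Submodule.mem_top
    rw [hL] at hx
    simpa using hx
  letI : Module (A ⧸ m) L := hts.module
  haveI : IsScalarTower A (A ⧸ m) L := Module.IsTorsionBySet.isScalarTower hts
  letI : Field (A ⧸ m) := Ideal.Quotient.field m
  haveI : DecidableEq (Module.Free.ChooseBasisIndex (A ⧸ m) L) := Classical.decEq _
  let b := Module.Free.chooseBasis (A ⧸ m) L
  let e : L ≃ₗ[A] (Module.Free.ChooseBasisIndex (A ⧸ m) L →₀ (A ⧸ m)) :=
    b.repr.restrictScalars A
  have hfin : Function.Exact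
      (g.rTensor (Module.Free.ChooseBasisIndex (A ⧸ m) L →₀ (A ⧸ m)))
      (f.rTensor (Module.Free.ChooseBasisIndex (A ⧸ m) L →₀ (A ⧸ m))) :=
    exact_rTensor_finsupp (Module.Free.ChooseBasisIndex (A ⧸ m) L) g f hbase
  refine @exact_transfer A _ (G ⊗[A] (Module.Free.ChooseBasisIndex (A ⧸ m) L →₀ (A ⧸ m)))
    (F ⊗[A] (Module.Free.ChooseBasisIndex (A ⧸ m) L →₀ (A ⧸ m)))
    (E ⊗[A] (Module.Free.ChooseBasisIndex (A ⧸ m) L →₀ (A ⧸ m)))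
    (G ⊗[A] L) (F ⊗[A] L) (E ⊗[A] L) _ _ _ _ _ _ _ _ _ _ _ _
    (g.rTensor (Module.Free.ChooseBasisIndex (A ⧸ m) L →₀ (A ⧸ m)))
    (f.rTensor (Module.Free.ChooseBasisIndex (A ⧸ m) L →₀ (A ⧸ m)))
    (g.rTensor L) (f.rTensor L)
    (LinearEquiv.lTensor G e.symm) (LinearEquiv.lTensor F e.symm) (LinearEquiv.lTensor E e.symm)
    ?_ ?_ hfin
  · intro t
    rw [lTensor_equiv_apply, lTensor_equiv_apply]
    exact rT_lT_comm g _ t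
  · intro t
    rw [lTensor_equiv_apply, lTensor_equiv_apply]
    exact rT_lT_comm f _ t

lemma exact_of_pow_smul_top_eq_bot [Module.Flat A E] (m : Ideal A) [m.IsMaximal]
    (g : G →ₗ[A] F) (f : F →ₗ[A] E) (hfg : ∀ x, f (g x) = 0)
    (hbase : Function.Exact (g.rTensor (A ⧸ m)) (f.rTensor (A ⧸ m)))
    (n : ℕ) (L : Type*) [AddCommGroup L] [Module A L]
    (hL : m ^ n • (⊤ : Submodule A L) = ⊥) :
    Function.Exact (g.rTensor L) (f.rTensor L) := by
  induction n generalizing L with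
  | zero =>
    have htop : (⊤ : Submodule A L) = ⊥ := by
      rw [← Submodule.top_smul (⊤ : Submodule A L), ← Ideal.one_eq_top, ← pow_zero m, hL]
    refine exact_of_smul_top_eq_bot m g f hbase L (le_bot_iff.mp ?_)
    rw [← htop]
    exact Submodule.smul_le_right
  | succ n ih =>
    set L' : Submodule A L := m ^ n • ⊤ with hL'
    have h1 : Function.Exact (g.rTensor L') (f.rTensor L') := by
      refine exact_of_smul_top_eq_bot m g f hbase L' ?_
      apply Submodule.map_injective_of_injective L'.injective_subtype
      rw [Submodule.map_smul'', Submodule.map_top, Submodule.range_subtype, Submodule.map_bot]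
      rw [hL', ← Submodule.smul_assoc, smul_eq_mul, ← pow_succ']
      exact hL
    have h2 : Function.Exact (g.rTensor (L ⧸ L')) (f.rTensor (L ⧸ L')) := by
      refine ih (L ⧸ L') (le_bot_iff.mp ?_)
      rw [Submodule.smul_le]
      intro r hr x _
      obtain ⟨y, rfl⟩ := Submodule.mkQ_surjective L' x
      have : r • y ∈ L' := by
        rw [hL']
        exact Submodule.smul_mem_smul hr Submodule.mem_top
      simpa [← Submodule.Quotient.mk_smul, Submodule.Quotient.mk_eq_zero] using this
    exact chase g f hfg L' h1 h2




lemma mem_smul_top_B {B M : Type*} [CommRing B] [Algebra A B]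
    [AddCommGroup M] [Module A M] [Module B M] [IsScalarTower A B M]
    (I : Ideal A) (J : Ideal B) (hIJ : ∀ a ∈ I, algebraMap A B a ∈ J)
    {x : M} (hx : x ∈ I • (⊤ : Submodule A M)) : x ∈ J • (⊤ : Submodule B M) := by
  refine Submodule.smul_induction_on hx ?_ ?_
  · intro c hc y _
    rw [← algebraMap_smul B c y]
    exact Submodule.smul_mem_smul (hIJ c hc) Submodule.mem_top
  · intro y z hy hz
    exact Submodule.add_mem _ hy hz

lemma algebraMap_pow_mem {B : Type*} [CommRing B] [Algebra A B]
    (I : Ideal A) (J : Ideal B) (h : ∀ a ∈ I, algebraMap A B a ∈ J) (n : ℕ)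
    {a : A} (ha : a ∈ I ^ n) : algebraMap A B a ∈ J ^ n := by
  have hle : Ideal.map (algebraMap A B) (I ^ n) ≤ J ^ n := by
    rw [Ideal.map_pow]
    exact Ideal.pow_right_mono (Ideal.map_le_iff_le_comap.mpr fun a ha => h a ha) n
  exact hle (Ideal.mem_map_of_mem _ ha)

lemma tmul_mem_smul_top {M L : Type*} [AddCommGroup M] [AddCommGroup L] [Module A M]
    [Module A L] (I : Ideal A) (x : M) {z : L} (hz : z ∈ I • (⊤ : Submodule A L)) :
    x ⊗ₜ[A] z ∈ I • (⊤ : Submodule A (M ⊗[A] L)) := by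
  refine Submodule.smul_induction_on hz ?_ ?_
  · intro c hc y _
    rw [tmul_smul]
    exact Submodule.smul_mem_smul hc Submodule.mem_top
  · intro u v hu hv
    rw [tmul_add]
    exact Submodule.add_mem _ hu hv

lemma mem_of_range_lTensor {M L : Type*} [AddCommGroup M] [AddCommGroup L] [Module A M]
    [Module A L] (I : Ideal A) (t : M ⊗[A] ↥(I • (⊤ : Submodule A L))) :
    (((I • (⊤ : Submodule A L)).subtype).lTensor M) t ∈ I • (⊤ : Submodule A (M ⊗[A] L)) := by
  induction t using TensorProduct.induction_on with
  | zero => simp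
  | tmul x z => simpa using tmul_mem_smul_top I x z.2
  | add u v hu hv =>
    rw [map_add]
    exact Submodule.add_mem _ hu hv

lemma smul_top_quot_eq_bot {L : Type*} [AddCommGroup L] [Module A L]
    (I : Ideal A) (N : Submodule A L) (h : I • (⊤ : Submodule A L) ≤ N) :
    I • (⊤ : Submodule A (L ⧸ N)) = ⊥ := by
  refine le_bot_iff.mp (Submodule.smul_le.mpr ?_)
  intro r hr x _
  obtain ⟨y, rfl⟩ := Submodule.mkQ_surjective N x
  have hy : r • y ∈ N := h (Submodule.smul_mem_smul hr Submodule.mem_top)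
  simpa [← Submodule.Quotient.mk_smul, Submodule.Quotient.mk_eq_zero] using hy

lemma finite_tensor (B : Type*) [CommRing B] [Algebra A B]
    {M L : Type*} [AddCommGroup M] [AddCommGroup L]
    [Module A M] [Module B M] [IsScalarTower A B M] [Module A L]
    [Module.Finite B M] [Module.Finite A L] :
    Module.Finite B (M ⊗[A] L) := by
  classical
  obtain ⟨sM, hsM⟩ := Module.Finite.fg_top (R := B) (M := M)
  obtain ⟨sL, hsL⟩ := Module.Finite.fg_top (R := A) (M := L)
  refine ⟨⟨sM.image₂ (fun (x : M) (y : L) => x ⊗ₜ[A] y) sL, ?_⟩⟩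
  rw [eq_top_iff]
  set T := Submodule.span B (sM.image₂ (fun (x : M) (y : L) => x ⊗ₜ[A] y) sL : Set (M ⊗[A] L))
  have step1 : ∀ (x : M), ∀ y ∈ sL, x ⊗ₜ[A] y ∈ T := by
    intro x y hy
    have hx : x ∈ Submodule.span B (sM : Set M) := by rw [hsM]; trivial
    refine Submodule.span_induction ?_ ?_ ?_ ?_ hx
    · intro z hz
      exact Submodule.subset_span (Finset.mem_image₂.mpr ⟨z, hz, y, hy, rfl⟩)
    · rw [TensorProduct.zero_tmul]; exact Submodule.zero_mem _
    · intro u v _ _ hu hv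
      rw [TensorProduct.add_tmul]; exact Submodule.add_mem _ hu hv
    · intro b u _ hu
      rw [← TensorProduct.smul_tmul']; exact Submodule.smul_mem _ b hu
  have step2 : ∀ (x : M) (y : L), x ⊗ₜ[A] y ∈ T := by
    intro x y
    have hy : y ∈ Submodule.span A (sL : Set L) := by rw [hsL]; trivial
    refine Submodule.span_induction ?_ ?_ ?_ ?_ hy
    · intro z hz; exact step1 x z hz
    · rw [TensorProduct.tmul_zero]; exact Submodule.zero_mem _
    · intro u v _ _ hu hv
      rw [TensorProduct.tmul_add]; exact Submodule.add_mem _ hu hv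
    · intro a u _ hu
      rw [TensorProduct.tmul_smul, ← algebraMap_smul B a (x ⊗ₜ[A] u)]
      exact Submodule.smul_mem _ _ hu
  intro t _
  induction t using TensorProduct.induction_on with
  | zero => exact Submodule.zero_mem _
  | tmul x y => exact step2 x y
  | add u v hu hv => exact Submodule.add_mem _ (hu trivial) (hv trivial)


lemma krull_fg {B : Type*} [CommRing B] [IsNoetherianRing B] [IsLocalRing B]
    {C : Type*} [AddCommGroup C] [Module B C] [Module.Finite B C]
    {x : C}
    (hx : ∀ n : ℕ, x ∈ (IsLocalRing.maximalIdeal B) ^ n • (⊤ : Submodule B C)) : x = 0 := by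
  obtain ⟨k, π, hπ⟩ := Module.Finite.exists_fin' B C
  let e := π.quotKerEquivOfSurjective hπ
  have hD : ∀ n : ℕ, e.symm x ∈ (IsLocalRing.maximalIdeal B) ^ n •
      (⊤ : Submodule B ((Fin k → B) ⧸ LinearMap.ker π)) := by
    intro n
    have := Submodule.mem_map_of_mem (f := e.symm.toLinearMap) (hx n)
    rw [Submodule.map_smul'', Submodule.map_top, LinearEquiv.range] at this
    exact Submodule.smul_mono le_rfl le_top this
  have hbot : e.symm x ∈ (⨅ i : ℕ, (IsLocalRing.maximalIdeal B) ^ i • ⊤ :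
      Submodule B ((Fin k → B) ⧸ LinearMap.ker π)) := Submodule.mem_iInf _ |>.mpr hD
  have heq := Ideal.iInf_pow_smul_eq_bot_of_isLocalRing (R := B)
    (M := (Fin k → B) ⧸ LinearMap.ker π) (I := IsLocalRing.maximalIdeal B)
    ((IsLocalRing.maximalIdeal.isMaximal B).ne_top)
  rw [heq, Submodule.mem_bot] at hbot
  have := congrArg e hbot
  rwa [LinearEquiv.apply_symm_apply, map_zero] at this

universe uL

lemma exact_fg {B : Type*} [CommRing B] [Algebra A B]
    [IsNoetherianRing B] [IsLocalRing A] [IsLocalRing B] [IsLocalHom (algebraMap A B)]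
    {G F E : Type*} [AddCommGroup G] [AddCommGroup F] [AddCommGroup E]
    [Module A G] [Module A F] [Module A E] [Module B G] [Module B F] [Module B E]
    [IsScalarTower A B G] [IsScalarTower A B F] [IsScalarTower A B E]
    [Module.Finite B F] [Module.Flat A E]
    (g : G →ₗ[B] F) (f : F →ₗ[B] E) (hfg : ∀ x, f (g x) = 0)
    (ht : ∀ (n : ℕ) (L' : Type uL) [AddCommGroup L'] [Module A L'],
      (IsLocalRing.maximalIdeal A) ^ n • (⊤ : Submodule A L') = ⊥ →
      Function.Exact ((g.restrictScalars A).rTensor L') ((f.restrictScalars A).rTensor L'))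
    (L : Type uL) [AddCommGroup L] [Module A L] [Module.Finite A L] :
    Function.Exact ((g.restrictScalars A).rTensor L) ((f.restrictScalars A).rTensor L) := by
  have hα : ∀ a ∈ IsLocalRing.maximalIdeal A, algebraMap A B a ∈ IsLocalRing.maximalIdeal B := by
    intro a ha
    rw [IsLocalRing.mem_maximalIdeal, mem_nonunits_iff]
    intro hu
    exact (IsLocalRing.mem_maximalIdeal a).mp ha (IsLocalHom.map_nonunit a hu)
  intro x
  constructor
  swap
  · rintro ⟨y, rfl⟩
    exact rTensor_comp_zero (g.restrictScalars A) (f.restrictScalars A) hfg y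
  intro hx
  set m := IsLocalRing.maximalIdeal A with hm
  set mB := IsLocalRing.maximalIdeal B with hmB
  let gB : G ⊗[A] L →ₗ[B] F ⊗[A] L :=
    TensorProduct.AlgebraTensorModule.map g (LinearMap.id (R := A) (M := L))
  have hgB : ∀ t, gB t = (g.restrictScalars A).rTensor L t := by
    intro t
    induction t using TensorProduct.induction_on with
    | zero => simp
    | tmul a l => rfl
    | add u v hu hv => rw [map_add, map_add, hu, hv]
  set N : Submodule B (F ⊗[A] L) := LinearMap.range gB with hN
  haveI : Module.Finite B (F ⊗[A] L) := finite_tensor B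
  have key : ∀ n : ℕ, N.mkQ x ∈ mB ^ n • (⊤ : Submodule B ((F ⊗[A] L) ⧸ N)) := by
    intro n
    have hkill : m ^ n • (⊤ : Submodule A (L ⧸ (m ^ n • (⊤ : Submodule A L)))) = ⊥ :=
      smul_top_quot_eq_bot (m ^ n) _ le_rfl
    have hex := ht n (L ⧸ (m ^ n • (⊤ : Submodule A L))) hkill
    have hπ : (f.restrictScalars A).rTensor _
        (((m ^ n • (⊤ : Submodule A L)).mkQ).lTensor F x) = 0 := by
      rw [← rT_lT_comm, hx, map_zero]
    obtain ⟨y'', hy''⟩ := (hex _).mp hπ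
    obtain ⟨y, rfl⟩ := LinearMap.lTensor_surjective G
      (Submodule.mkQ_surjective (m ^ n • (⊤ : Submodule A L))) y''
    have h0 : ((m ^ n • (⊤ : Submodule A L)).mkQ).lTensor F
        (x - (g.restrictScalars A).rTensor L y) = 0 := by
      rw [map_sub, ← hy'', rT_lT_comm, sub_self]
    obtain ⟨x', hx'⟩ := ((lTensor_exact F
      (LinearMap.exact_subtype_mkQ (m ^ n • (⊤ : Submodule A L)))
      (Submodule.mkQ_surjective _)) _).mp h0
    have hmem : x - (g.restrictScalars A).rTensor L y
        ∈ (m ^ n) • (⊤ : Submodule A (F ⊗[A] L)) := by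
      rw [← hx']
      exact mem_of_range_lTensor (m ^ n) x'
    have hmemB : x - (g.restrictScalars A).rTensor L y
        ∈ (mB ^ n) • (⊤ : Submodule B (F ⊗[A] L)) :=
      mem_smul_top_B (m ^ n) (mB ^ n) (fun a ha => algebraMap_pow_mem m mB hα n ha) hmem
    have hmk : N.mkQ x = N.mkQ (x - (g.restrictScalars A).rTensor L y) := by
      have hz : N.mkQ ((g.restrictScalars A).rTensor L y) = 0 := by
        rw [Submodule.mkQ_apply, Submodule.Quotient.mk_eq_zero]
        exact ⟨y, hgB y⟩
      rw [map_sub, hz, sub_zero]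
    rw [hmk]
    have hmap := Submodule.mem_map_of_mem (f := N.mkQ) hmemB
    rw [Submodule.map_smul''] at hmap
    exact Submodule.smul_mono le_rfl le_top hmap
  have hmk0 : N.mkQ x = 0 := krull_fg key
  have hxN : x ∈ N := by
    rwa [Submodule.mkQ_apply, Submodule.Quotient.mk_eq_zero] at hmk0
  obtain ⟨y, hy⟩ := hxN
  exact ⟨y, by rw [← hgB, hy]⟩

lemma exists_fg {M L : Type*} [AddCommGroup M] [AddCommGroup L] [Module A M] [Module A L]
    (x : M ⊗[A] L) : ∃ L₀ : Submodule A L, L₀.FG ∧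
      x ∈ Set.range ((L₀.subtype).lTensor M) := by
  induction x using TensorProduct.induction_on with
  | zero => exact ⟨⊥, Submodule.fg_bot, 0, map_zero _⟩
  | tmul a l =>
    exact ⟨Submodule.span A {l}, Submodule.fg_span_singleton l,
      a ⊗ₜ ⟨l, Submodule.mem_span_singleton_self l⟩, by simp⟩
  | add u v hu hv =>
    obtain ⟨L₁, h₁, u₀, hu₀⟩ := hu
    obtain ⟨L₂, h₂, v₀, hv₀⟩ := hv
    refine ⟨L₁ ⊔ L₂, Submodule.FG.sup h₁ h₂,
      (Submodule.inclusion (le_sup_left : L₁ ≤ L₁ ⊔ L₂)).lTensor M u₀ +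
        (Submodule.inclusion (le_sup_right : L₂ ≤ L₁ ⊔ L₂)).lTensor M v₀, ?_⟩
    rw [map_add, ← LinearMap.comp_apply, ← LinearMap.lTensor_comp,
      Submodule.subtype_comp_inclusion, ← LinearMap.comp_apply, ← LinearMap.lTensor_comp,
      Submodule.subtype_comp_inclusion, hu₀, hv₀]

end LocalCritAux

open LocalCritAux in
/-- Local criterion for exactness: let `A → B` be a local homomorphism of Noetherian
local rings with residue field `κ = A/m`, and `G → F → E` a complex of finitely
generated `B`-modules with `F` and `E` flat over `A`. If the induced complex
`G ⊗_A κ → F ⊗_A κ → E ⊗_A κ` (i.e. `G/mG → F/mF → E/mE`) is exact, then `G → F → E` is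
exact, and `G ⊗_A L → F ⊗_A L → E ⊗_A L` is exact for every `A`-module `L`. -/
theorem stmt15 (A B : Type*) [CommRing A] [CommRing B]
    [IsNoetherianRing A] [IsNoetherianRing B] [IsLocalRing A] [IsLocalRing B]
    [Algebra A B] [IsLocalHom (algebraMap A B)]
    (G F E : Type*) [AddCommGroup G] [AddCommGroup F] [AddCommGroup E]
    [Module B G] [Module B F] [Module B E]
    [Module A G] [Module A F] [Module A E]
    [IsScalarTower A B G] [IsScalarTower A B F] [IsScalarTower A B E]
    [Module.Finite B G] [Module.Finite B F] [Module.Finite B E]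
    [Module.Flat A F] [Module.Flat A E]
    (g : G →ₗ[B] F) (f : F →ₗ[B] E)
    (hcomplex : ∀ x, f (g x) = 0)
    (hexact : Function.Exact
      (Submodule.mapQ
        ((IsLocalRing.maximalIdeal A) • (⊤ : Submodule A G))
        ((IsLocalRing.maximalIdeal A) • (⊤ : Submodule A F))
        (g.restrictScalars A)
        (by
          rw [← Submodule.map_le_iff_le_comap, Submodule.map_smul'']
          exact smul_mono_right _ le_top))
      (Submodule.mapQ
        ((IsLocalRing.maximalIdeal A) • (⊤ : Submodule A F))
        ((IsLocalRing.maximalIdeal A) • (⊤ : Submodule A E))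
        (f.restrictScalars A)
        (by
          rw [← Submodule.map_le_iff_le_comap, Submodule.map_smul'']
          exact smul_mono_right _ le_top))) :
    Function.Exact g f ∧
      ∀ (L : Type*) [AddCommGroup L] [Module A L],
        Function.Exact ((g.restrictScalars A).rTensor L) ((f.restrictScalars A).rTensor L) := by
  haveI : (IsLocalRing.maximalIdeal A).IsMaximal := IsLocalRing.maximalIdeal.isMaximal A
  set m := IsLocalRing.maximalIdeal A with hm
  set g₀ := g.restrictScalars A with hg₀
  set f₀ := f.restrictScalars A with hf₀
  have hfg₀ : ∀ x, f₀ (g₀ x) = 0 := hcomplex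
  -- translate the hypothesis to tensor form
  have hbase : Function.Exact (g₀.rTensor (A ⧸ m)) (f₀.rTensor (A ⧸ m)) := by
    refine exact_transfer _ _ (g₀.rTensor (A ⧸ m)) (f₀.rTensor (A ⧸ m))
      (TensorProduct.tensorQuotEquivQuotSMul G m).symm
      (TensorProduct.tensorQuotEquivQuotSMul F m).symm
      (TensorProduct.tensorQuotEquivQuotSMul E m).symm
      ?_ ?_ hexact
    · intro u
      obtain ⟨z, rfl⟩ := Submodule.Quotient.mk_surjective _ u
      rw [Submodule.mapQ_apply, TensorProduct.tensorQuotEquivQuotSMul_symm_mk,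
        TensorProduct.tensorQuotEquivQuotSMul_symm_mk]
      rfl
    · intro u
      obtain ⟨z, rfl⟩ := Submodule.Quotient.mk_surjective _ u
      rw [Submodule.mapQ_apply, TensorProduct.tensorQuotEquivQuotSMul_symm_mk,
        TensorProduct.tensorQuotEquivQuotSMul_symm_mk]
      rfl
  constructor
  · -- exactness of the original complex, via L = A
    have hA := exact_fg g f hcomplex
      (fun n L' _ _ hL' => exact_of_pow_smul_top_eq_bot m g₀ f₀ hfg₀ hbase n L' hL') A
    have hEx : Function.Exact ⇑g₀ ⇑f₀ := by
      refine exact_transfer (g₀.rTensor A) (f₀.rTensor A) g₀ f₀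
        (TensorProduct.rid A G) (TensorProduct.rid A F) (TensorProduct.rid A E) ?_ ?_ hA
      · intro t
        induction t using TensorProduct.induction_on with
        | zero => simp
        | tmul z a => simp [TensorProduct.rid_tmul]
        | add u v hu hv => simp [map_add, hu, hv]
      · intro t
        induction t using TensorProduct.induction_on with
        | zero => simp
        | tmul z a => simp [TensorProduct.rid_tmul]
        | add u v hu hv => simp [map_add, hu, hv]
    exact hEx
  · intro L _ _
    intro x
    constructor
    · intro hx
      obtain ⟨L₀, hFG, x₀, hx₀⟩ := exists_fg x
      haveI : Module.Finite A L₀ := Module.Finite.iff_fg.mpr hFG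
      have hEinj : Function.Injective ((L₀.subtype).lTensor E) :=
        Module.Flat.lTensor_preserves_injective_linearMap _ L₀.injective_subtype
      have h0 : f₀.rTensor L₀ x₀ = 0 := by
        apply hEinj
        rw [map_zero, rT_lT_comm, hx₀, hx]
      have hexL₀ := exact_fg g f hcomplex
        (fun n L' _ _ hL' => exact_of_pow_smul_top_eq_bot m g₀ f₀ hfg₀ hbase n L' hL') L₀
      obtain ⟨y₀, hy₀⟩ := (hexL₀ _).mp h0
      exact ⟨(L₀.subtype).lTensor G y₀, by rw [← rT_lT_comm, hy₀, hx₀]⟩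
    · rintro ⟨y, rfl⟩
      exact rTensor_comp_zero g₀ f₀ hfg₀ y
end

section
/- Let B be a Noetherian local ring with maximal ideal m, and let G → F → E be a complex of finitely generated B-modules. Suppose that for every integer n ≥ 1 the induced complex G/m^nG → F/m^nF → E/m^nE is exact (at the middle term). Then G → F → E is exact. -/
/-- Let `B` be a Noetherian local ring with maximal ideal `m` and `G → F → E` a complex
of finitely generated `B`-modules. If for every `n ≥ 1` the induced complex
`G/mⁿG → F/mⁿF → E/mⁿE` is exact (at the middle term), then `G → F → E` is exact. -/
theorem stmt16 (B : Type*) [CommRing B] [IsNoetherianRing B] [IsLocalRing B]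
    (G F E : Type*) [AddCommGroup G] [AddCommGroup F] [AddCommGroup E]
    [Module B G] [Module B F] [Module B E]
    [Module.Finite B G] [Module.Finite B F] [Module.Finite B E]
    (g : G →ₗ[B] F) (f : F →ₗ[B] E)
    (hcomplex : ∀ x, f (g x) = 0)
    (hexact : ∀ n : ℕ, 1 ≤ n →
      Function.Exact
        (Submodule.mapQ
          (((IsLocalRing.maximalIdeal B) ^ n) • (⊤ : Submodule B G))
          (((IsLocalRing.maximalIdeal B) ^ n) • (⊤ : Submodule B F))
          g
          (by
            rw [← Submodule.map_le_iff_le_comap, Submodule.map_smul'']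
            exact smul_mono_right _ le_top))
        (Submodule.mapQ
          (((IsLocalRing.maximalIdeal B) ^ n) • (⊤ : Submodule B F))
          (((IsLocalRing.maximalIdeal B) ^ n) • (⊤ : Submodule B E))
          f
          (by
            rw [← Submodule.map_le_iff_le_comap, Submodule.map_smul'']
            exact smul_mono_right _ le_top))) :
    Function.Exact g f := by
  rw [LinearMap.exact_iff]
  apply le_antisymm
  swap
  · rintro _ ⟨y, rfl⟩
    exact hcomplex y
  -- Work in the quotient M := F ⧸ range g
  intro x hx
  set R := LinearMap.range g
  by_contra hxR
  -- π x lies in ⨅ n, m^n • ⊤ in F ⧸ R, which is ⊥ by Krull intersection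
  have key : ∀ n : ℕ, 1 ≤ n → ∃ y : G, x - g y ∈
      ((IsLocalRing.maximalIdeal B) ^ n • (⊤ : Submodule B F)) := by
    intro n hn
    obtain ⟨yq, hy⟩ := (hexact n hn (Submodule.Quotient.mk x)).mp (by
      rw [Submodule.mapQ_apply, show f x = 0 from hx, Submodule.Quotient.mk_eq_zero]
      exact Submodule.zero_mem _)
    obtain ⟨y, rfl⟩ := Submodule.Quotient.mk_surjective _ yq
    rw [Submodule.mapQ_apply] at hy
    refine ⟨y, ?_⟩
    have h1 := (Submodule.Quotient.eq _).mp hy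
    simpa using Submodule.neg_mem _ h1
  have hmem : Submodule.Quotient.mk (p := R) x ∈
      (⨅ n : ℕ, (IsLocalRing.maximalIdeal B) ^ n • (⊤ : Submodule B (F ⧸ R))) := by
    rw [Submodule.mem_iInf]
    intro n
    rcases Nat.eq_zero_or_pos n with rfl | hn
    · simp
    obtain ⟨y, hy⟩ := key n hn
    have : Submodule.Quotient.mk (p := R) x = Submodule.Quotient.mk (x - g y) := by
      rw [Submodule.Quotient.eq]
      exact ⟨y, (sub_sub_cancel x (g y)).symm⟩
    rw [this]
    have : Submodule.map R.mkQ ((IsLocalRing.maximalIdeal B) ^ n • (⊤ : Submodule B F))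
        ≤ (IsLocalRing.maximalIdeal B) ^ n • (⊤ : Submodule B (F ⧸ R)) := by
      rw [Submodule.map_smul'']
      exact smul_mono_right _ le_top
    exact this ⟨x - g y, hy, rfl⟩
  -- transfer to a quotient of B^k, which lives in the universe of B,
  -- to apply Krull's intersection theorem
  obtain ⟨k, l, hl⟩ := Module.Finite.exists_fin' B (F ⧸ R)
  let e := l.quotKerEquivOfSurjective hl
  have hb : (⨅ n : ℕ, (IsLocalRing.maximalIdeal B) ^ n •
      (⊤ : Submodule B ((Fin k → B) ⧸ LinearMap.ker l))) = ⊥ :=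
    Ideal.iInf_pow_smul_eq_bot_of_isLocalRing (IsLocalRing.maximalIdeal B) ((IsLocalRing.maximalIdeal.isMaximal B).ne_top)
  have h2 : e.symm (Submodule.Quotient.mk x) ∈ (⨅ n : ℕ, (IsLocalRing.maximalIdeal B) ^ n •
      (⊤ : Submodule B ((Fin k → B) ⧸ LinearMap.ker l))) := by
    rw [Submodule.mem_iInf]
    intro n
    have h3 := (Submodule.mem_iInf _).mp hmem n
    have h4 : e.symm (Submodule.Quotient.mk x) ∈
        Submodule.map (e.symm : (F ⧸ R) →ₗ[B] _)
          ((IsLocalRing.maximalIdeal B) ^ n • (⊤ : Submodule B (F ⧸ R))) :=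
      ⟨_, h3, rfl⟩
    rwa [Submodule.map_smul'', Submodule.map_top, LinearEquiv.range] at h4
  rw [hb, Submodule.mem_bot] at h2
  have h5 : (Submodule.Quotient.mk x : F ⧸ R) = 0 := by
    have := congrArg e h2
    simpa using this
  rw [Submodule.Quotient.mk_eq_zero] at h5
  exact hxR h5
end
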